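/- arXiv:1202.5587 — 5 statements merged into one kernel-verified Lean document; each statement's English description precedes it below -/
import Mathlib

section
/- Let H_1,…,H_k be finite simple graphs, where H_i has m_i vertices with 2 ≤ m_i ≤ m, let β_1,…,β_k be real numbers, and for X ⊆ E_n set K(X) = n² Σ_{i=1}^k β_i d(H_i,X). Then the Banach space norm ||K|| = sup_{e ∈ E_n} Σ_{X : e ∈ X} |K(X)| satisfies ||K|| ≤ m(m−1) Σ_{i=1}^k |β_i|. -/
open Finset

attribute [local instance] Classical.propDecidable

/-- `E_n`: the set of vertex pairs (2-element subsets) of `V_n = Fin n`, modeled as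
non-diagonal elements of `Sym2 (Fin n)`. -/
abbrev VertexPair (n : ℕ) := {e : Sym2 (Fin n) // ¬ e.IsDiag}

/-- Exact homomorphism density `d(H,X) = |ehom(H,X)| / n^{m'}`: maps `f : V(H) → V_n` that are
homomorphisms into the complete graph `K_n` and whose induced edge map sends `E(H)` onto `X`. -/
noncomputable def exactDensity {m' n : ℕ} (H : SimpleGraph (Fin m')) (X : Finset (VertexPair n)) :
    ℝ :=
  (Nat.card {f : Fin m' → Fin n //
      (∀ u v, H.Adj u v → f u ≠ f v) ∧
      Sym2.map f '' H.edgeSet = Subtype.val '' (X : Set (VertexPair n))} : ℝ) / (n : ℝ) ^ m'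

lemma fiber_card_le {m' n : ℕ} (u v : Fin m') (huv : u ≠ v) (a b : Fin n) :
    (univ.filter (fun f : Fin m' → Fin n => f u = a ∧ f v = b)).card ≤ n ^ (m' - 2) := by
  have h := Finset.card_le_card_of_injOn
    (f := fun (f : Fin m' → Fin n) (x : {x : Fin m' // x ∈ ({u,v}ᶜ : Finset (Fin m'))}) => f x.val)
    (s := univ.filter (fun f : Fin m' → Fin n => f u = a ∧ f v = b))
    (t := (univ : Finset ({x : Fin m' // x ∈ ({u,v}ᶜ : Finset (Fin m'))} → Fin n)))
    (fun _ _ => mem_univ _)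
    (by
      intro f hf g hg hfg
      simp only [Finset.coe_filter, Set.mem_setOf_eq, mem_univ, true_and] at hf hg; obtain ⟨hf1, hf2⟩ := hf; obtain ⟨hg1, hg2⟩ := hg
      funext x
      by_cases hx : x = u
      · rw [hx, hf1, hg1]
      by_cases hx' : x = v
      · rw [hx', hf2, hg2]
      · exact congrFun hfg ⟨x, by simp [hx, hx']⟩)
  calc _ ≤ _ := h
    _ = n ^ (m' - 2) := by
      rw [Finset.card_univ, Fintype.card_fun, Fintype.card_coe, Finset.card_compl,
        Finset.card_pair huv, Fintype.card_fin, Fintype.card_fin]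

lemma count_edge_le {m' n : ℕ} (H : SimpleGraph (Fin m')) (e : Sym2 (Fin n)) :
    (univ.filter (fun f : Fin m' → Fin n =>
        (∀ u v, H.Adj u v → f u ≠ f v) ∧ e ∈ Sym2.map f '' H.edgeSet)).card
      ≤ m' * (m' - 1) * n ^ (m' - 2) := by
  induction e using Sym2.ind with
  | _ a b =>
  have hsub : (univ.filter (fun f : Fin m' → Fin n =>
        (∀ u v, H.Adj u v → f u ≠ f v) ∧ s(a, b) ∈ Sym2.map f '' H.edgeSet)) ⊆
      (univ : Finset (Fin m')).offDiag.biUnion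
        (fun p => univ.filter (fun f : Fin m' → Fin n => f p.1 = a ∧ f p.2 = b)) := by
    intro f hf
    simp only [Finset.mem_filter, mem_univ, true_and] at hf
    obtain ⟨hhom, ed, hed, hmap⟩ := hf
    induction ed using Sym2.ind with
    | _ u v =>
    rw [SimpleGraph.mem_edgeSet] at hed
    rw [Sym2.map_pair_eq, Sym2.eq_iff] at hmap
    rw [Finset.mem_biUnion]
    rcases hmap with ⟨h1, h2⟩ | ⟨h1, h2⟩
    · exact ⟨(u, v), by simp [Finset.mem_offDiag, hed.ne], by simp [h1, h2]⟩
    · exact ⟨(v, u), by simp [Finset.mem_offDiag, hed.ne'], by simp [h1, h2]⟩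
  calc _ ≤ _ := Finset.card_le_card hsub
    _ ≤ ∑ p ∈ (univ : Finset (Fin m')).offDiag,
          (univ.filter (fun f : Fin m' → Fin n => f p.1 = a ∧ f p.2 = b)).card :=
        Finset.card_biUnion_le
    _ ≤ ∑ p ∈ (univ : Finset (Fin m')).offDiag, n ^ (m' - 2) := by
        refine Finset.sum_le_sum fun p hp => ?_
        exact fiber_card_le p.1 p.2 (Finset.mem_offDiag.mp hp).2.2 a b
    _ = m' * (m' - 1) * n ^ (m' - 2) := by
        rw [Finset.sum_const, smul_eq_mul, Finset.offDiag_card, Finset.card_univ,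
          Fintype.card_fin]
        congr 1
        cases m' with
        | zero => rfl
        | succ t => simp [Nat.succ_sub_one, Nat.succ_mul, Nat.mul_succ]

lemma image_not_diag {m' n : ℕ} {H : SimpleGraph (Fin m')} {f : Fin m' → Fin n}
    (hhom : ∀ u v, H.Adj u v → f u ≠ f v) :
    ∀ q ∈ Sym2.map f '' H.edgeSet, ¬ q.IsDiag := by
  rintro q ⟨ed, hed, rfl⟩
  induction ed using Sym2.ind with
  | _ u v =>
  rw [SimpleGraph.mem_edgeSet] at hed
  rw [Sym2.map_pair_eq, Sym2.mk_isDiag_iff]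
  exact hhom u v hed

lemma sum_density_le {m' n : ℕ} (hm' : 2 ≤ m') (hn : 1 ≤ n) (H : SimpleGraph (Fin m'))
    (e : VertexPair n) :
    ∑ X ∈ univ.filter (fun X : Finset (VertexPair n) => e ∈ X), exactDensity H X
      ≤ (m' : ℝ) * ((m' : ℝ) - 1) / (n : ℝ) ^ 2 := by
  have hn0 : (0:ℝ) < (n:ℝ) := by exact_mod_cast hn
  set key : (Fin m' → Fin n) → Finset (VertexPair n) := fun f =>
    univ.filter (fun p : VertexPair n => p.val ∈ Sym2.map f '' H.edgeSet) with hkey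
  set S : Finset (Fin m' → Fin n) := univ.filter (fun f =>
      (∀ u v, H.Adj u v → f u ≠ f v) ∧ e.val ∈ Sym2.map f '' H.edgeSet) with hS
  -- rewrite each exactDensity as a filter card
  have hd : ∀ X : Finset (VertexPair n), exactDensity H X =
      ((univ.filter (fun f : Fin m' → Fin n =>
        (∀ u v, H.Adj u v → f u ≠ f v) ∧
        Sym2.map f '' H.edgeSet = Subtype.val '' (X : Set (VertexPair n)))).card : ℝ)
        / (n : ℝ) ^ m' := by
    intro X
    rw [exactDensity, Nat.card_eq_fintype_card, Fintype.card_subtype]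
  have hfiber : ∀ X ∈ univ.filter (fun X : Finset (VertexPair n) => e ∈ X),
      (S.filter (fun f => key f = X)) =
      univ.filter (fun f : Fin m' → Fin n =>
        (∀ u v, H.Adj u v → f u ≠ f v) ∧
        Sym2.map f '' H.edgeSet = Subtype.val '' (X : Set (VertexPair n))) := by
    intro X hX
    rw [mem_filter] at hX
    ext f
    simp only [mem_filter, mem_univ, true_and, hS, hkey]
    constructor
    · rintro ⟨⟨hhom, hmem⟩, rfl⟩
      refine ⟨hhom, ?_⟩
      ext q
      constructor
      · intro hq
        exact ⟨⟨q, image_not_diag hhom q hq⟩, by simpa using hq, rfl⟩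
      · rintro ⟨p, hp, rfl⟩
        simpa using hp
    · rintro ⟨hhom, himg⟩
      refine ⟨⟨hhom, ?_⟩, ?_⟩
      · rw [himg]; exact ⟨e, hX.2, rfl⟩
      · ext p
        simp only [mem_filter, mem_univ, true_and, himg]
        constructor
        · rintro ⟨q, hq, hqe⟩
          rwa [← Subtype.coe_injective hqe]
        · intro hp
          exact ⟨p, hp, rfl⟩
  have hcards : S.card = ∑ X ∈ univ.filter (fun X : Finset (VertexPair n) => e ∈ X),
      (S.filter (fun f => key f = X)).card := by
    refine Finset.card_eq_sum_card_fiberwise ?_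
    intro f hf
    rw [hS, Finset.mem_coe, mem_filter] at hf
    simp only [Finset.mem_coe, mem_filter, mem_univ, true_and, hkey]
    exact hf.2.2
  calc ∑ X ∈ univ.filter (fun X : Finset (VertexPair n) => e ∈ X), exactDensity H X
      = ((S.card : ℝ)) / (n : ℝ) ^ m' := by
        rw [hcards]
        push_cast
        rw [Finset.sum_div]
        refine Finset.sum_congr rfl fun X hX => ?_
        rw [hd X, hfiber X hX]
    _ ≤ ((m' * (m' - 1) * n ^ (m' - 2) : ℕ) : ℝ) / (n : ℝ) ^ m' := by
        apply div_le_div_of_nonneg_right ?_ (by positivity)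
        · exact_mod_cast count_edge_le H e.val
    _ = (m' : ℝ) * ((m' : ℝ) - 1) / (n : ℝ) ^ 2 := by
        have hsplit : (n : ℝ) ^ m' = (n : ℝ) ^ 2 * (n : ℝ) ^ (m' - 2) := by
          rw [← pow_add]
          congr 1
          omega
        push_cast [Nat.cast_sub (by omega : 1 ≤ m')]
        rw [hsplit]
        have h1 : (n : ℝ) ^ 2 ≠ 0 := by positivity
        have h2 : (n : ℝ) ^ (m' - 2) ≠ 0 := by positivity
        field_simp

lemma density_nonneg {m' n : ℕ} (H : SimpleGraph (Fin m')) (X : Finset (VertexPair n)) :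
    0 ≤ exactDensity H X := by
  unfold exactDensity; positivity

/-- for the interaction `K(X) = n² Σ_{i=1}^k β_i d(H_i,X)`, the Banach space norm
`||K|| = sup_{e ∈ E_n} Σ_{X : e ∈ X} |K(X)|` satisfies `||K|| ≤ m(m−1) Σ_{i=1}^k |β_i|`. -/
theorem interaction_norm_bound {n k m : ℕ} (hn : 1 ≤ n)
    (mi : Fin k → ℕ) (hmi : ∀ i, 2 ≤ mi i ∧ mi i ≤ m)
    (H : ∀ i, SimpleGraph (Fin (mi i))) (β : Fin k → ℝ) :
    (⨆ e : VertexPair n,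
        ∑ X ∈ Finset.univ.filter (fun X : Finset (VertexPair n) => e ∈ X),
          |(n : ℝ) ^ 2 * ∑ i, β i * exactDensity (H i) X|) ≤
      (m : ℝ) * ((m : ℝ) - 1) * ∑ i, |β i| := by
  have hn0 : (0:ℝ) < (n:ℝ) := by exact_mod_cast hn
  have hn2 : ((n:ℝ))^2 ≠ 0 := by positivity
  have hrhs : 0 ≤ (m : ℝ) * ((m : ℝ) - 1) * ∑ i, |β i| := by
    rcases isEmpty_or_nonempty (Fin k) with hk | hk
    · simp
    · have hm2 : 2 ≤ m := le_trans (hmi (Classical.arbitrary _)).1 (hmi (Classical.arbitrary _)).2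
      have : (2:ℝ) ≤ (m:ℝ) := by exact_mod_cast hm2
      have h1 : (0:ℝ) ≤ (m:ℝ) * ((m:ℝ) - 1) := by nlinarith
      exact mul_nonneg h1 (Finset.sum_nonneg fun i _ => abs_nonneg _)
  refine Real.iSup_le (fun e => ?_) hrhs
  calc ∑ X ∈ Finset.univ.filter (fun X : Finset (VertexPair n) => e ∈ X),
          |(n : ℝ) ^ 2 * ∑ i, β i * exactDensity (H i) X|
      ≤ ∑ X ∈ Finset.univ.filter (fun X : Finset (VertexPair n) => e ∈ X),
          ∑ i, |β i| * ((n : ℝ) ^ 2 * exactDensity (H i) X) := by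
        refine Finset.sum_le_sum fun X _ => ?_
        rw [Finset.mul_sum]
        refine (Finset.abs_sum_le_sum_abs _ _).trans ?_
        refine Finset.sum_le_sum fun i _ => ?_
        rw [abs_mul, abs_mul, abs_of_nonneg (by positivity : (0:ℝ) ≤ (n:ℝ)^2),
          abs_of_nonneg (density_nonneg _ _)]
        ring_nf
        exact le_refl _
    _ = ∑ i, |β i| * ((n : ℝ) ^ 2 *
          ∑ X ∈ Finset.univ.filter (fun X : Finset (VertexPair n) => e ∈ X),
            exactDensity (H i) X) := by
        rw [Finset.sum_comm]
        refine Finset.sum_congr rfl fun i _ => ?_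
        rw [Finset.mul_sum, Finset.mul_sum]
    _ ≤ ∑ i, |β i| * ((m : ℝ) * ((m : ℝ) - 1)) := by
        refine Finset.sum_le_sum fun i _ => ?_
        refine mul_le_mul_of_nonneg_left ?_ (abs_nonneg _)
        have h1 := sum_density_le (hmi i).1 hn (H i) e
        have h2 : (mi i : ℝ) * ((mi i : ℝ) - 1) ≤ (m : ℝ) * ((m : ℝ) - 1) := by
          have ha : (mi i : ℝ) ≤ (m : ℝ) := by exact_mod_cast (hmi i).2
          have hb : (2:ℝ) ≤ (mi i : ℝ) := by exact_mod_cast (hmi i).1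
          nlinarith
        calc (n : ℝ) ^ 2 * ∑ X ∈ Finset.univ.filter
                (fun X : Finset (VertexPair n) => e ∈ X), exactDensity (H i) X
            ≤ (n : ℝ) ^ 2 * ((mi i : ℝ) * ((mi i : ℝ) - 1) / (n : ℝ) ^ 2) :=
              mul_le_mul_of_nonneg_left h1 (by positivity)
          _ = (mi i : ℝ) * ((mi i : ℝ) - 1) := by field_simp
          _ ≤ _ := h2
    _ = (m : ℝ) * ((m : ℝ) - 1) * ∑ i, |β i| := by
        rw [← Finset.sum_mul, mul_comm]
end

section
/- Let E be a finite set, let p ≥ 2 be an integer, M > 1, and let K : {X : X ⊆ E} → ℝ satisfy K(X) = 0 whenever |X| > p. Define ||K|| = sup_{e ∈ E} Σ_{X : e ∈ X} |K(X)| and, for nonempty N ⊆ E, v_N = Σ_{Γ connected, ∪Γ = N} Π_{X ∈ Γ}(e^{|K(X)|} − 1). If ||K|| ≤ (log M)(p−1)^p / (2(Mp)^p (1 + (p−1) log M)), then for every e ∈ E, Σ_{N : e ∈ N} v_N M^{|N|} ≤ log M. -/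
open Finset

attribute [local instance] Classical.propDecidable

/-- A hypergraph `Γ` (a finite collection of subsets/links of `E`) is connected if its support
`∪Γ` is nonempty and cannot be partitioned into two nonempty disjoint parts such that every
link lies entirely inside one of the two parts. -/
def HyperConnected {E : Type*} [DecidableEq E] (Γ : Finset (Finset E)) : Prop :=
  (Γ.sup id).Nonempty ∧
    ∀ A B : Finset E, A ∪ B = Γ.sup id → Disjoint A B → A.Nonempty → B.Nonempty →
      ∃ X ∈ Γ, ¬ X ⊆ A ∧ ¬ X ⊆ B

/-- The activity `v_N = Σ_{Γ connected, ∪Γ = N} Π_{X ∈ Γ} (e^{|K(X)|} − 1)`. -/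
noncomputable def clusterV {E : Type*} [Fintype E] [DecidableEq E] (K : Finset E → ℝ)
    (N : Finset E) : ℝ :=
  ∑ Γ ∈ Finset.univ.filter (fun Γ : Finset (Finset E) =>
      (∀ X ∈ Γ, X.Nonempty) ∧ HyperConnected Γ ∧ Γ.sup id = N),
    ∏ X ∈ Γ, (Real.exp |K X| - 1)

set_option maxHeartbeats 1000000

set_option linter.unusedSectionVars false
namespace KPaux
variable {E : Type*} [DecidableEq E]

def hrel (G : Finset (Finset E)) (X Y : Finset E) : Prop :=
  X ∈ G ∧ Y ∈ G ∧ (X ∩ Y).Nonempty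

def reach (G : Finset (Finset E)) : Finset E → Finset E → Prop :=
  Relation.ReflTransGen (hrel G)

noncomputable def comp (G : Finset (Finset E)) (X : Finset E) : Finset (Finset E) :=
  G.filter (reach G X)

theorem hrel_symm (G : Finset (Finset E)) : Symmetric (hrel G) := by
  intro X Y ⟨h1, h2, h3⟩
  exact ⟨h2, h1, by rwa [Finset.inter_comm]⟩

theorem reach_symm (G : Finset (Finset E)) : Symmetric (reach G) :=
  fun X Y h => (@Relation.ReflTransGen.stdSymm _ _ ⟨fun a b h' => hrel_symm G h'⟩).symm X Y h

theorem mem_comp_self {G : Finset (Finset E)} {X : Finset E} (h : X ∈ G) : X ∈ comp G X := by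
  simp only [comp, Finset.mem_filter]
  exact ⟨h, Relation.ReflTransGen.refl⟩

theorem comp_subset (G : Finset (Finset E)) (X : Finset E) : comp G X ⊆ G :=
  Finset.filter_subset _ _

theorem mem_comp_iff {G : Finset (Finset E)} {X Y : Finset E} :
    Y ∈ comp G X ↔ Y ∈ G ∧ reach G X Y := Finset.mem_filter.trans (by simp)

theorem comp_eq_of_reach {G : Finset (Finset E)} {X Y : Finset E} (h : reach G X Y) :
    comp G X = comp G Y := by
  ext Z
  simp only [mem_comp_iff]
  constructor
  · rintro ⟨hZ, hr⟩; exact ⟨hZ, Relation.ReflTransGen.trans (reach_symm G h) hr⟩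
  · rintro ⟨hZ, hr⟩; exact ⟨hZ, Relation.ReflTransGen.trans h hr⟩

/-- If a link of `G` meets the support of a component, it belongs to that component. -/
theorem mem_comp_of_meet {G : Finset (Finset E)} {X Z : Finset E} (hZ : Z ∈ G)
    (h : (Z ∩ (comp G X).sup id).Nonempty) : Z ∈ comp G X := by
  obtain ⟨v, hv⟩ := h
  rw [Finset.mem_inter] at hv
  obtain ⟨hv1, hv2⟩ := hv
  rw [Finset.mem_sup] at hv2
  obtain ⟨W, hW, hvW⟩ := hv2
  rw [mem_comp_iff] at hW ⊢
  exact ⟨hZ, hW.2.trans (Relation.ReflTransGen.single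
    ⟨hW.1, hZ, ⟨v, Finset.mem_inter.2 ⟨hvW, hv1⟩⟩⟩)⟩

theorem subset_sup {G : Finset (Finset E)} {X : Finset E} (h : X ∈ G) : X ⊆ G.sup id :=
  Finset.le_sup (f := id) h

/-- along a chain inside a split support, everything stays on one side -/
theorem chain_side {G : Finset (Finset E)} {A B Z Z' : Finset E}
    (h : reach G Z Z') (hZA : Z ⊆ A)
    (hside : ∀ W ∈ G, reach G Z W → W ⊆ A ∨ W ⊆ B)
    (hdisj : Disjoint A B) : Z' ⊆ A := by
  induction h with
  | refl => exact hZA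
  | @tail W V hZW hWV ih =>
    have hWA : W ⊆ A := ih
    obtain ⟨hWG, hVG, ⟨v, hv⟩⟩ := hWV
    have hVr : reach G Z V := Relation.ReflTransGen.tail hZW ⟨hWG, hVG, ⟨v, hv⟩⟩
    rcases hside V hVG hVr with h' | h'
    · exact h'
    · exfalso
      rw [Finset.mem_inter] at hv
      exact (Finset.disjoint_left.1 hdisj) (hWA hv.1) (h' hv.2)

theorem comp_connected {G : Finset (Finset E)} (hne : ∀ Y ∈ G, Y.Nonempty)
    {X : Finset E} (hX : X ∈ G) : HyperConnected (comp G X) := by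
  constructor
  · obtain ⟨v, hv⟩ := hne X hX
    exact ⟨v, Finset.mem_sup.2 ⟨X, mem_comp_self hX, hv⟩⟩
  · intro A B hAB hdisj hA hB
    by_contra hcon
    push_neg at hcon
    -- every link of the component lies on one side
    have hside : ∀ Z ∈ comp G X, Z ⊆ A ∨ Z ⊆ B := by
      intro Z hZ
      by_cases hZA : Z ⊆ A
      · exact Or.inl hZA
      · exact Or.inr (hcon Z hZ hZA)
    -- get a link inside B
    obtain ⟨b, hb⟩ := hB
    have hbsup : b ∈ (comp G X).sup id := hAB ▸ Finset.mem_union_right A hb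
    obtain ⟨ZB, hZB, hbZB⟩ := Finset.mem_sup.1 hbsup
    have hZBB : ZB ⊆ B := by
      rcases hside ZB hZB with h | h
      · exact ((Finset.disjoint_left.1 hdisj) (h hbZB) hb).elim
      · exact h
    -- get a link inside A
    obtain ⟨a, ha⟩ := hA
    have hasup : a ∈ (comp G X).sup id := hAB ▸ Finset.mem_union_left B ha
    obtain ⟨ZA, hZA, haZA⟩ := Finset.mem_sup.1 hasup
    have hZAA : ZA ⊆ A := by
      rcases hside ZA hZA with h | h
      · exact h
      · exact ((Finset.disjoint_left.1 hdisj) ha (h haZA)).elim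
    -- ZA reaches ZB
    rw [mem_comp_iff] at hZA hZB
    have hr : reach G ZA ZB := Relation.ReflTransGen.trans (reach_symm G hZA.2) hZB.2
    have : ZB ⊆ A := by
      refine chain_side hr hZAA (fun W hW hrw => ?_) hdisj
      have : W ∈ comp G X := by
        rw [mem_comp_iff]; exact ⟨hW, Relation.ReflTransGen.trans hZA.2 hrw⟩
      exact hside W this
    exact (Finset.disjoint_left.1 hdisj) (this hbZB) hb

variable [Fintype E]

noncomputable def wgt (K : Finset E → ℝ) (X : Finset E) : ℝ := Real.exp |K X| - 1

theorem wgt_nonneg (K : Finset E → ℝ) (X : Finset E) : 0 ≤ wgt K X := by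
  have : Real.exp 0 ≤ Real.exp |K X| := Real.exp_le_exp.2 (abs_nonneg _)
  simp only [Real.exp_zero] at this
  simp only [wgt]; linarith

noncomputable def Wt (K : Finset E → ℝ) (M : ℝ) (Γ : Finset (Finset E)) : ℝ :=
  (∏ X ∈ Γ, wgt K X) * M ^ (Γ.sup id).card

theorem Wt_nonneg (K : Finset E → ℝ) {M : ℝ} (hM : 0 ≤ M) (Γ : Finset (Finset E)) :
    0 ≤ Wt K M Γ :=
  mul_nonneg (Finset.prod_nonneg fun X _ => wgt_nonneg K X) (pow_nonneg hM _)

theorem Wt_empty (K : Finset E → ℝ) (M : ℝ) : Wt K M (∅ : Finset (Finset E)) = 1 := by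
  simp [Wt]

noncomputable def CC (Λ : Finset E) (e : E) : Finset (Finset (Finset E)) :=
  Finset.univ.filter (fun Γ : Finset (Finset E) =>
    (∀ X ∈ Γ, X.Nonempty) ∧ HyperConnected Γ ∧ e ∈ Γ.sup id ∧ Γ.sup id ⊆ Λ)

noncomputable def Psi (K : Finset E → ℝ) (M : ℝ) (Λ : Finset E) (e : E) : ℝ :=
  ∑ Γ ∈ CC Λ e, Wt K M Γ

theorem Psi_nonneg (K : Finset E → ℝ) {M : ℝ} (hM : 0 ≤ M) (Λ : Finset E) (e : E) :
    0 ≤ Psi K M Λ e :=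
  Finset.sum_nonneg fun Γ _ => Wt_nonneg K hM Γ

noncomputable def pick (e : E) (s : Finset E) : E := if h : s.Nonempty then h.choose else e

theorem pick_mem {e : E} {s : Finset E} (h : s.Nonempty) : pick e s ∈ s := by
  rw [pick, dif_pos h]; exact h.choose_spec

/-- every component of the part of a connected `Γ` away from `e` is pinned to the
support of the links through `e`. -/
theorem pin_nonempty {Λ : Finset E} {e : E} {Γ : Finset (Finset E)} (hΓ : Γ ∈ CC Λ e)
    {Y : Finset E} (hY : Y ∈ Γ.filter (fun X => e ∉ X)) :
    (((comp (Γ.filter (fun X => e ∉ X)) Y).sup id) ∩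
      ((Γ.filter (fun X => e ∈ X)).sup id).erase e).Nonempty := by
  simp only [CC, Finset.mem_filter, Finset.mem_univ, true_and] at hΓ
  obtain ⟨hne, hconn, he, hsub⟩ := hΓ
  set G' := Γ.filter (fun X => e ∉ X) with hG'
  set A := (comp G' Y).sup id with hA
  have hYG' : Y ∈ G' := hY
  have hYΓ : Y ∈ Γ := (Finset.filter_subset _ _) hY
  have hAsub : A ⊆ Γ.sup id :=
    Finset.sup_mono ((comp_subset G' Y).trans (Finset.filter_subset _ _))
  have heA : e ∉ A := by
    intro h
    obtain ⟨W, hW, heW⟩ := Finset.mem_sup.1 h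
    have := (comp_subset G' Y) hW
    rw [hG', Finset.mem_filter] at this
    exact this.2 heW
  obtain ⟨X, hXΓ, hXA, hXB⟩ := hconn.2 A (Γ.sup id \ A)
    (Finset.union_sdiff_of_subset hAsub) Finset.disjoint_sdiff
    (by obtain ⟨v, hv⟩ := hne Y hYΓ
        exact ⟨v, Finset.mem_sup.2 ⟨Y, mem_comp_self hYG', hv⟩⟩)
    ⟨e, Finset.mem_sdiff.2 ⟨he, heA⟩⟩
  -- X meets A
  have hmeet : (X ∩ A).Nonempty := by
    rw [Finset.not_subset] at hXB
    obtain ⟨v, hvX, hvB⟩ := hXB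
    have hvsup : v ∈ Γ.sup id := subset_sup hXΓ hvX
    have : v ∈ A := by
      by_contra hvA
      exact hvB (Finset.mem_sdiff.2 ⟨hvsup, hvA⟩)
    exact ⟨v, Finset.mem_inter.2 ⟨hvX, this⟩⟩
  by_cases heX : e ∈ X
  · obtain ⟨v, hv⟩ := hmeet
    rw [Finset.mem_inter] at hv
    refine ⟨v, Finset.mem_inter.2 ⟨hv.2, Finset.mem_erase.2 ⟨?_, ?_⟩⟩⟩
    · intro hveq; exact heA (hveq ▸ hv.2)
    · exact Finset.mem_sup.2 ⟨X, Finset.mem_filter.2 ⟨hXΓ, heX⟩, hv.1⟩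
  · exfalso
    have hXG' : X ∈ G' := Finset.mem_filter.2 ⟨hXΓ, heX⟩
    have : X ∈ comp G' Y := mem_comp_of_meet hXG' (by rwa [← hA])
    exact hXA (subset_sup this)

theorem comp_eq_of_supp_meet {G : Finset (Finset E)} {Z Z' : Finset E} (hZ' : Z' ∈ G)
    (h : (((comp G Z).sup id) ∩ ((comp G Z').sup id)).Nonempty) : comp G Z = comp G Z' := by
  obtain ⟨g, hg⟩ := h
  rw [Finset.mem_inter] at hg
  obtain ⟨W', hW', hgW'⟩ := Finset.mem_sup.1 hg.2
  have hW'G : W' ∈ G := comp_subset G Z' hW'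
  have h1 : W' ∈ comp G Z :=
    mem_comp_of_meet hW'G ⟨g, Finset.mem_inter.2 ⟨hgW', hg.1⟩⟩
  rw [mem_comp_iff] at h1 hW'
  exact (comp_eq_of_reach h1.2).trans (comp_eq_of_reach hW'.2).symm

noncomputable def DD (Λ : Finset E) (e : E) : Finset (Finset (Finset E)) :=
  Finset.univ.filter (fun Δ : Finset (Finset E) =>
    Δ.Nonempty ∧ ∀ X ∈ Δ, X.Nonempty ∧ e ∈ X ∧ X ⊆ Λ)

theorem empty_not_mem_CC (Λ : Finset E) (e : E) : (∅ : Finset (Finset E)) ∉ CC Λ e := by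
  simp only [CC, Finset.mem_filter, Finset.mem_univ, true_and]
  rintro ⟨-, ⟨hne, -⟩, -, -⟩
  simp at hne

def Dpart (e : E) (Γ : Finset (Finset E)) : Finset (Finset E) := Γ.filter (fun X => e ∈ X)
def Gpart (e : E) (Γ : Finset (Finset E)) : Finset (Finset E) := Γ.filter (fun X => e ∉ X)
noncomputable def pinf (e : E) (Γ : Finset (Finset E)) (Y : Finset E) : E :=
  pick e ((comp (Gpart e Γ) Y).sup id ∩ ((Dpart e Γ).sup id).erase e)
noncomputable def γmf (e : E) (Γ : Finset (Finset E)) (f : E) : Finset (Finset E) :=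
  (Gpart e Γ).filter (fun Y => pinf e Γ Y = f)

theorem Gpart_union (e : E) (Γ : Finset (Finset E)) :
    Gpart e Γ = Finset.univ.biUnion (γmf e Γ) := by
  ext Y
  simp only [γmf, Finset.mem_biUnion, Finset.mem_filter, Finset.mem_univ, true_and]
  constructor
  · intro h; exact ⟨pinf e Γ Y, h, rfl⟩
  · rintro ⟨f, h, -⟩; exact h

theorem γmf_disjoint (e : E) (Γ : Finset (Finset E)) :
    (↑(Finset.univ : Finset E) : Set E).PairwiseDisjoint (γmf e Γ) := by
  intro f _ f' _ hff'
  simp only [Function.onFun]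
  rw [Finset.disjoint_left]
  intro Y hY hY'
  simp only [γmf, Finset.mem_filter] at hY hY'
  exact hff' (hY.2.symm.trans hY'.2)

theorem mem_CC_iff {Λ : Finset E} {e : E} {Γ : Finset (Finset E)} :
    Γ ∈ CC Λ e ↔ (∀ X ∈ Γ, X.Nonempty) ∧ HyperConnected Γ ∧ e ∈ Γ.sup id ∧ Γ.sup id ⊆ Λ := by
  simp only [CC, Finset.mem_filter, Finset.mem_univ, true_and]

/-- each nonempty fiber of `γmf` is a pinned component -/
theorem γmf_fiber {Λ : Finset E} {e : E} {Γ : Finset (Finset E)} (hΓ : Γ ∈ CC Λ e)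
    {f : E} {Y : Finset E} (hY : Y ∈ γmf e Γ f) :
    γmf e Γ f = comp (Gpart e Γ) Y ∧ f ∈ ((Dpart e Γ).sup id).erase e ∧
      f ∈ (comp (Gpart e Γ) Y).sup id := by
  simp only [γmf, Finset.mem_filter] at hY
  obtain ⟨hYGp, hpinY⟩ := hY
  have hpY := pin_nonempty hΓ hYGp
  have hpickY := pick_mem (e := e) hpY
  rw [Finset.mem_inter] at hpickY
  have hfY : f ∈ (comp (Gpart e Γ) Y).sup id := by rw [← hpinY]; exact hpickY.1
  have hfe : f ∈ ((Dpart e Γ).sup id).erase e := by rw [← hpinY]; exact hpickY.2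
  refine ⟨?_, hfe, hfY⟩
  ext Z
  simp only [γmf, Finset.mem_filter]
  constructor
  · rintro ⟨hZGp, hpinZ⟩
    have hpZ := pin_nonempty hΓ hZGp
    have hpickZ := pick_mem (e := e) hpZ
    rw [Finset.mem_inter] at hpickZ
    have hcomp : comp (Gpart e Γ) Z = comp (Gpart e Γ) Y := by
      apply comp_eq_of_supp_meet hYGp
      refine ⟨f, Finset.mem_inter.2 ⟨?_, hfY⟩⟩
      rw [← hpinZ]; exact hpickZ.1
    rw [← hcomp]; exact mem_comp_self hZGp
  · intro hZ
    have hZGp : Z ∈ Gpart e Γ := comp_subset _ _ hZ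
    refine ⟨hZGp, ?_⟩
    have hcomp : comp (Gpart e Γ) Z = comp (Gpart e Γ) Y := by
      rw [mem_comp_iff] at hZ
      exact (comp_eq_of_reach hZ.2).symm
    rw [← hpinY]
    unfold pinf
    rw [hcomp]

theorem step (K : Finset E → ℝ) {M : ℝ} (hM : 1 ≤ M) (Λ : Finset E) (e : E) :
    Psi K M Λ e ≤ ∑ Δ ∈ DD Λ e, (∏ X ∈ Δ, wgt K X) * M ^ ((Δ.sup id).card) *
      ∏ f ∈ (Δ.sup id).erase e, (1 + Psi K M (Λ.erase e) f) := by
  have hM0 : (0:ℝ) ≤ M := le_trans zero_le_one hM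
  set ι : Finset (Finset E) → (Σ _ : Finset (Finset E), E → Finset (Finset E)) := fun Γ =>
    ⟨Dpart e Γ, γmf e Γ⟩ with hι
  set t : Finset (Finset E) → E → Finset (Finset (Finset E)) := fun Δ f =>
    if f ∈ (Δ.sup id).erase e then insert ∅ (CC (Λ.erase e) f) else {∅} with ht
  set B := (DD Λ e).sigma (fun Δ => Fintype.piFinset (t Δ)) with hB
  set Gfun : (Σ _ : Finset (Finset E), E → Finset (Finset E)) → ℝ := fun q =>
    ((∏ X ∈ q.1, wgt K X) * M ^ ((q.1.sup id).card)) * ∏ f : E, Wt K M (q.2 f) with hGfun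
  -- claim A : weight bound
  have claimA : ∀ Γ ∈ CC Λ e, Wt K M Γ ≤ Gfun (ι Γ) := by
    intro Γ hΓ
    obtain ⟨hne, hconn, he, hsub⟩ := mem_CC_iff.1 hΓ
    have hprod : (∏ X ∈ Γ, wgt K X) =
        (∏ X ∈ Dpart e Γ, wgt K X) * ∏ f : E, ∏ X ∈ γmf e Γ f, wgt K X := by
      rw [← Finset.prod_filter_mul_prod_filter_not Γ (fun X => e ∈ X) (wgt K)]
      congr 1
      rw [show Γ.filter (fun X => ¬ e ∈ X) = Gpart e Γ from rfl, Gpart_union e Γ]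
      exact Finset.prod_biUnion (γmf_disjoint e Γ)
    have hcard : (Γ.sup id).card ≤
        ((Dpart e Γ).sup id).card + ∑ f : E, ((γmf e Γ f).sup id).card := by
      have h1 : Γ.sup id = (Dpart e Γ).sup id ∪ (Gpart e Γ).sup id := by
        conv_lhs => rw [← Finset.filter_union_filter_not_eq (fun X => e ∈ X) Γ]
        rw [Finset.sup_union]
        rfl
      have h2 : (Gpart e Γ).sup id = Finset.univ.sup (fun f => (γmf e Γ f).sup id) := by
        rw [Gpart_union e Γ, Finset.sup_biUnion]
      calc (Γ.sup id).card ≤ ((Dpart e Γ).sup id).card + ((Gpart e Γ).sup id).card := by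
            rw [h1]; exact Finset.card_union_le _ _
        _ ≤ ((Dpart e Γ).sup id).card + ∑ f : E, ((γmf e Γ f).sup id).card := by
            gcongr
            rw [h2, Finset.sup_eq_biUnion]
            exact Finset.card_biUnion_le
    calc Wt K M Γ = (∏ X ∈ Γ, wgt K X) * M ^ (Γ.sup id).card := rfl
      _ ≤ (∏ X ∈ Γ, wgt K X) *
          M ^ (((Dpart e Γ).sup id).card + ∑ f : E, ((γmf e Γ f).sup id).card) := by
          apply mul_le_mul_of_nonneg_left (pow_le_pow_right₀ hM hcard)
          exact Finset.prod_nonneg fun X _ => wgt_nonneg K X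
      _ = Gfun (ι Γ) := by
          rw [hGfun, hι]
          simp only [Wt]
          rw [hprod, pow_add, ← Finset.prod_pow_eq_pow_sum, Finset.prod_mul_distrib]
          ring
  -- claim C : ι maps into B
  have claimC : ∀ Γ ∈ CC Λ e, ι Γ ∈ B := by
    intro Γ hΓ
    obtain ⟨hne, hconn, he, hsub⟩ := mem_CC_iff.1 hΓ
    rw [hB, Finset.mem_sigma]
    constructor
    · simp only [DD, Finset.mem_filter, Finset.mem_univ, true_and, hι]
      constructor
      · obtain ⟨X, hX, heX⟩ := Finset.mem_sup.1 he
        exact ⟨X, Finset.mem_filter.2 ⟨hX, heX⟩⟩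
      · intro X hX
        simp only [Dpart, Finset.mem_filter] at hX
        exact ⟨hne X hX.1, hX.2, (subset_sup hX.1).trans hsub⟩
    · rw [Fintype.mem_piFinset]
      intro f
      rw [ht]
      simp only [hι]
      by_cases hemp : (γmf e Γ f).Nonempty
      · obtain ⟨Y, hY⟩ := hemp
        obtain ⟨hcompeq, hfe, hfY⟩ := γmf_fiber hΓ hY
        rw [if_pos hfe]
        apply Finset.mem_insert_of_mem
        have hYGp : Y ∈ Gpart e Γ := by
          simp only [γmf, Finset.mem_filter] at hY; exact hY.1
        rw [mem_CC_iff, hcompeq]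
        refine ⟨?_, ?_, hfY, ?_⟩
        · intro X hX
          exact hne X ((Finset.filter_subset _ _) (comp_subset _ _ hX))
        · exact comp_connected (fun Z hZ => hne Z ((Finset.filter_subset _ _) hZ)) hYGp
        · intro v hv
          obtain ⟨W, hW, hvW⟩ := Finset.mem_sup.1 hv
          have hWGp : W ∈ Gpart e Γ := comp_subset _ _ hW
          simp only [Gpart, Finset.mem_filter] at hWGp
          refine Finset.mem_erase.2 ⟨?_, hsub (subset_sup hWGp.1 hvW)⟩
          intro hveq
          exact hWGp.2 (hveq ▸ hvW)
      · rw [Finset.not_nonempty_iff_eq_empty] at hemp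
        rw [hemp]
        split
        · exact Finset.mem_insert_self _ _
        · exact Finset.mem_singleton_self _
  -- claim B : injectivity
  have claimInj : ∀ Γ₁ ∈ CC Λ e, ∀ Γ₂ ∈ CC Λ e, ι Γ₁ = ι Γ₂ → Γ₁ = Γ₂ := by
    intro Γ₁ _ Γ₂ _ hιeq
    rw [hι] at hιeq
    have hfst : Dpart e Γ₁ = Dpart e Γ₂ := congrArg Sigma.fst hιeq
    have hsnd : γmf e Γ₁ = γmf e Γ₂ :=
      congrArg (fun q : (Σ _ : Finset (Finset E), E → Finset (Finset E)) => q.snd) hιeq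
    have h2 : Gpart e Γ₁ = Gpart e Γ₂ := by
      rw [Gpart_union e Γ₁, Gpart_union e Γ₂, hsnd]
    calc Γ₁ = Dpart e Γ₁ ∪ Gpart e Γ₁ := (Finset.filter_union_filter_not_eq _ Γ₁).symm
      _ = Dpart e Γ₂ ∪ Gpart e Γ₂ := by rw [hfst, h2]
      _ = Γ₂ := Finset.filter_union_filter_not_eq _ Γ₂
  have hGnonneg : ∀ q, 0 ≤ Gfun q := by
    intro q
    refine mul_nonneg (mul_nonneg ?_ ?_) ?_
    · exact Finset.prod_nonneg fun X _ => wgt_nonneg K X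
    · exact pow_nonneg hM0 _
    · exact Finset.prod_nonneg fun f _ => Wt_nonneg K hM0 _
  have hstep1 : Psi K M Λ e ≤ ∑ q ∈ B, Gfun q := by
    calc Psi K M Λ e ≤ ∑ Γ ∈ CC Λ e, Gfun (ι Γ) := Finset.sum_le_sum claimA
      _ = ∑ q ∈ (CC Λ e).image ι, Gfun q := (Finset.sum_image claimInj).symm
      _ ≤ ∑ q ∈ B, Gfun q := by
          apply Finset.sum_le_sum_of_subset_of_nonneg
          · intro q hq
            obtain ⟨Γ, hΓ, rfl⟩ := Finset.mem_image.1 hq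
            exact claimC Γ hΓ
          · intro q _ _; exact hGnonneg q
  refine hstep1.trans (le_of_eq ?_)
  rw [hB, Finset.sum_sigma]
  apply Finset.sum_congr rfl
  intro Δ hΔ
  have h2 : ∀ f : E, (∑ C ∈ t Δ f, Wt K M C) =
      if f ∈ (Δ.sup id).erase e then 1 + Psi K M (Λ.erase e) f else 1 := by
    intro f
    rw [ht]
    simp only
    split
    · rw [Finset.sum_insert (empty_not_mem_CC _ _), Wt_empty, Psi]
    · rw [Finset.sum_singleton, Wt_empty]
  calc ∑ γ ∈ Fintype.piFinset (t Δ), Gfun ⟨Δ, γ⟩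
      = ((∏ X ∈ Δ, wgt K X) * M ^ ((Δ.sup id).card)) *
        ∑ γ ∈ Fintype.piFinset (t Δ), ∏ f : E, Wt K M (γ f) := by
        rw [Finset.mul_sum]
    _ = ((∏ X ∈ Δ, wgt K X) * M ^ ((Δ.sup id).card)) *
        ∏ f : E, ∑ C ∈ t Δ f, Wt K M C := by
        rw [Finset.prod_univ_sum]
    _ = (∏ X ∈ Δ, wgt K X) * M ^ ((Δ.sup id).card) *
        ∏ f ∈ (Δ.sup id).erase e, (1 + Psi K M (Λ.erase e) f) := by
        rw [mul_assoc, mul_assoc]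
        congr 1
        congr 1
        rw [Finset.prod_congr rfl (fun f _ => h2 f)]
        rw [← Finset.prod_subset (Finset.subset_univ ((Δ.sup id).erase e))
          (fun f _ hf => if_neg hf)]
        exact Finset.prod_congr rfl (fun f hf => if_pos hf)


noncomputable def aKP (p : ℕ) (M : ℝ) : ℝ := min (Real.log M) (1/((p:ℝ)-1))
noncomputable def epsKP (p : ℕ) (M : ℝ) : ℝ :=
  Real.log M * ((p:ℝ)-1)^p / (2*(M*(p:ℝ))^p*(1+((p:ℝ)-1)*Real.log M))

theorem exp_sub_one_le (x : ℝ) : Real.exp x - 1 ≤ x * Real.exp x := by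
  have h := Real.add_one_le_exp (-x)
  rw [Real.exp_neg] at h
  have hp := Real.exp_pos x
  have h2 : (-x + 1) * Real.exp x ≤ (Real.exp x)⁻¹ * Real.exp x :=
    mul_le_mul_of_nonneg_right h hp.le
  rw [inv_mul_cancel₀ hp.ne'] at h2
  nlinarith

theorem numericKP (p : ℕ) (hp : 2 ≤ p) (M : ℝ) (hM : 1 < M) :
    M * (Real.exp (epsKP p M * Real.exp (epsKP p M) *
      (M * (1 + aKP p M))^(p-1)) - 1) ≤ aKP p M := by
  unfold aKP epsKP
  have hp2 : (2:ℝ) ≤ (p:ℝ) := by exact_mod_cast hp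
  have hM0 : 0 < M := lt_trans one_pos hM
  obtain ⟨L, hLdef⟩ : ∃ x, Real.log M = x := ⟨_, rfl⟩
  rw [hLdef]
  have hL : 0 < L := hLdef ▸ Real.log_pos hM
  obtain ⟨q, hqdef⟩ : ∃ x, (p:ℝ) - 1 = x := ⟨_, rfl⟩
  rw [hqdef]
  have hq1 : 1 ≤ q := by rw [← hqdef]; linarith
  have hq0 : 0 < q := lt_of_lt_of_le one_pos hq1
  obtain ⟨a, hadef⟩ : ∃ x, min L (1/q) = x := ⟨_, rfl⟩
  rw [hadef]
  have ha0 : 0 < a := hadef ▸ lt_min hL (by positivity)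
  have haq : a * q ≤ 1 := by
    have h : a ≤ 1/q := hadef ▸ min_le_right _ _
    calc a * q ≤ (1/q) * q := mul_le_mul_of_nonneg_right h hq0.le
      _ = 1 := by field_simp
  have haL : a ≤ L := hadef ▸ min_le_left _ _
  have h1qL : 0 < 1 + q * L := by nlinarith
  have hMp0 : 0 < (M*(p:ℝ))^p := pow_pos (by nlinarith) p
  have hden : 0 < 2*(M*(p:ℝ))^p*(1+q*L) := mul_pos (by linarith) h1qL
  obtain ⟨ε, hεdef⟩ : ∃ x, L * q^p / (2*(M*(p:ℝ))^p*(1+q*L)) = x := ⟨_, rfl⟩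
  rw [hεdef]
  have hε0 : 0 ≤ ε := by
    rw [← hεdef]
    apply div_nonneg _ hden.le
    positivity
  have hp0 : (0:ℝ) < (p:ℝ) := by linarith
  have hee : (0:ℝ) < Real.exp 1 := Real.exp_pos 1
  -- (1) ε * M^p ≤ a / (2e)
  have e1 : ε * M^p = (q^p / (p:ℝ)^p) * (L / (1+q*L)) / 2 := by
    rw [← hεdef, mul_pow]
    field_simp
  have e2 : q^p / (p:ℝ)^p ≤ 1 / Real.exp 1 := by
    have h1 : q / (p:ℝ) ≤ Real.exp (-(1/(p:ℝ))) := by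
      have h := Real.add_one_le_exp (-(1/(p:ℝ)))
      have heq : q / (p:ℝ) = -(1/(p:ℝ)) + 1 := by
        rw [← hqdef]; field_simp; ring
      linarith [heq ▸ h]
    have h2 : (q/(p:ℝ))^p ≤ (Real.exp (-(1/(p:ℝ))))^p :=
      pow_le_pow_left₀ (by positivity) h1 p
    have h3 : (Real.exp (-(1/(p:ℝ))))^p = Real.exp (-1) := by
      rw [← Real.exp_nat_mul]
      congr 1
      field_simp
    rw [div_pow] at h2
    rw [h3] at h2
    rwa [Real.exp_neg, inv_eq_one_div] at h2
  have e3 : L / (1+q*L) ≤ a := by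
    rw [← hadef]
    apply le_min
    · apply div_le_self hL.le; nlinarith
    · rw [div_le_div_iff₀ h1qL hq0]
      nlinarith
  have hεM : ε * M^p ≤ a / (2 * Real.exp 1) := by
    rw [e1]
    have hmm : (q^p / (p:ℝ)^p) * (L / (1+q*L)) ≤ (1/Real.exp 1) * a :=
      mul_le_mul e2 e3 (by positivity) (by positivity)
    have heq2 : (1/Real.exp 1) * a / 2 = a / (2 * Real.exp 1) := by
      rw [one_div_mul_eq_div, div_div, mul_comm]
    linarith
  have hexp1 : (2.7:ℝ) < Real.exp 1 := by
    have := Real.exp_one_gt_d9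
    linarith
  -- (2) ε ≤ 1/5
  have hMppow : (1:ℝ) ≤ M^p := one_le_pow₀ hM.le
  have ha1 : a ≤ 1 := by
    refine le_trans (hadef ▸ min_le_right L (1/q)) ?_
    rw [div_le_one hq0]
    linarith
  have hε5 : ε ≤ 1/5 := by
    have h1 : ε ≤ ε * M^p := le_mul_of_one_le_right hε0 hMppow
    have h2 : a / (2*Real.exp 1) ≤ 1/5 := by
      rw [div_le_iff₀ (by positivity)]
      nlinarith
    linarith
  -- (3) T ≤ exp ε * a / (2M)
  obtain ⟨T, hTdef⟩ : ∃ x, ε * Real.exp ε * (M * (1 + a))^(p-1) = x := ⟨_, rfl⟩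
  rw [hTdef]
  have hcast : ((p-1 : ℕ):ℝ) = q := by
    rw [← hqdef, Nat.cast_sub (by omega), Nat.cast_one]
  have hpow_a : (1+a)^(p-1) ≤ Real.exp 1 := by
    have h1 : (1+a) ≤ Real.exp a := by
      have := Real.add_one_le_exp a; linarith
    have h2 : (1+a)^(p-1) ≤ (Real.exp a)^(p-1) :=
      pow_le_pow_left₀ (by positivity) h1 _
    have h3 : (Real.exp a)^(p-1) = Real.exp (((p-1:ℕ):ℝ) * a) := by
      rw [← Real.exp_nat_mul]
    rw [h3, hcast] at h2
    refine h2.trans (Real.exp_le_exp.2 ?_)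
    rw [mul_comm]; exact haq
  have hεMp1 : ε * M^(p-1) ≤ a / (2 * Real.exp 1 * M) := by
    have hppred : M^p = M^(p-1) * M := by
      rw [← pow_succ]
      congr 1
      omega
    calc ε * M^(p-1) = ε * M^p / M := by
          rw [hppred]; field_simp
      _ ≤ (a / (2*Real.exp 1)) / M := by gcongr
      _ = a / (2*Real.exp 1*M) := by rw [div_div]
  have hT1 : T ≤ Real.exp ε * a / (2*M) := by
    rw [← hTdef, mul_pow]
    calc ε * Real.exp ε * (M^(p-1) * (1+a)^(p-1))
        = (ε * M^(p-1)) * ((1+a)^(p-1) * Real.exp ε) := by ring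
      _ ≤ (a / (2 * Real.exp 1 * M)) * (Real.exp 1 * Real.exp ε) := by
          apply mul_le_mul hεMp1 _ _ _
          · exact mul_le_mul_of_nonneg_right hpow_a (Real.exp_pos ε).le
          · apply mul_nonneg (pow_nonneg (by positivity) _) (Real.exp_pos ε).le
          · apply div_nonneg ha0.le; positivity
      _ = Real.exp ε * a / (2*M) := by
          field_simp
  -- a ≤ M / e
  have haM : a ≤ M / Real.exp 1 := by
    refine haL.trans ?_
    rw [← hLdef]
    have h1 : Real.log (M / Real.exp 1) ≤ M / Real.exp 1 - 1 :=
      Real.log_le_sub_one_of_pos (by positivity)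
    rw [Real.log_div hM0.ne' (Real.exp_pos 1).ne', Real.log_exp] at h1
    linarith
  -- exp ε ≤ 5/4
  have hexpε : Real.exp ε ≤ 5/4 := by
    have h1 : Real.exp ε ≤ Real.exp (1/5) := Real.exp_le_exp.2 hε5
    have h2 : Real.exp (1/5) ≤ 5/4 := by
      have h := Real.add_one_le_exp (-(1/5 : ℝ))
      rw [Real.exp_neg] at h
      have hp5 : (0:ℝ) < Real.exp (1/5) := Real.exp_pos _
      have h3 : (4/5 : ℝ) * Real.exp (1/5) ≤ 1 := by
        have := mul_le_mul_of_nonneg_right h hp5.le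
        rw [inv_mul_cancel₀ hp5.ne'] at this
        linarith
      linarith
    linarith
  -- T ≤ 1/4
  have hT0 : 0 ≤ T := by
    rw [← hTdef]
    exact mul_nonneg (mul_nonneg hε0 (Real.exp_pos ε).le)
      (pow_nonneg (mul_nonneg hM0.le (by linarith : (0:ℝ) ≤ 1 + a)) _)
  have hT4 : T ≤ 1/4 := by
    have hnum : Real.exp ε * a ≤ (5/4) * (M / Real.exp 1) :=
      mul_le_mul hexpε haM ha0.le (by norm_num)
    have h1 : Real.exp ε * a / (2*M) ≤ (5/4) * (M / Real.exp 1) / (2*M) :=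
      div_le_div_of_nonneg_right hnum (by positivity)
    have h2 : (5/4 : ℝ) * (M / Real.exp 1) / (2*M) = 5/(8 * Real.exp 1) := by
      field_simp
      ring
    rw [h2] at h1
    have h3 : (5:ℝ)/(8*Real.exp 1) ≤ 1/4 := by
      rw [div_le_div_iff₀ (by positivity) (by norm_num)]
      nlinarith
    linarith [hT1]
  -- ε + T ≤ log 2
  have hlog2 : (0.6931471803 : ℝ) < Real.log 2 := Real.log_two_gt_d9
  have hεT : Real.exp (ε + T) ≤ 2 := by
    have h1 : ε + T ≤ Real.log 2 := by linarith
    calc Real.exp (ε + T) ≤ Real.exp (Real.log 2) := Real.exp_le_exp.2 h1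
      _ = 2 := Real.exp_log two_pos
  -- final
  have hfin1 : Real.exp T - 1 ≤ T * Real.exp T := exp_sub_one_le T
  have hTexp : 0 < Real.exp T := Real.exp_pos T
  calc M * (Real.exp T - 1) ≤ M * (T * Real.exp T) :=
        mul_le_mul_of_nonneg_left hfin1 hM0.le
    _ ≤ M * ((Real.exp ε * a / (2*M)) * Real.exp T) := by
        apply mul_le_mul_of_nonneg_left _ hM0.le
        exact mul_le_mul_of_nonneg_right hT1 hTexp.le
    _ = a * (Real.exp ε * Real.exp T) / 2 := by
        field_simp
    _ = a * Real.exp (ε + T) / 2 := by rw [Real.exp_add]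
    _ ≤ a * 2 / 2 := by
        have := mul_le_mul_of_nonneg_left hεT ha0.le
        linarith
    _ = a := by ring

theorem aKP_pos {p : ℕ} (hp : 2 ≤ p) {M : ℝ} (hM : 1 < M) : 0 < aKP p M := by
  have hp2 : (2:ℝ) ≤ (p:ℝ) := by exact_mod_cast hp
  exact lt_min (Real.log_pos hM) (one_div_pos.2 (by linarith))

theorem Psi_not_mem {K : Finset E → ℝ} {M : ℝ} {Λ : Finset E} {e : E} (heΛ : e ∉ Λ) :
    Psi K M Λ e = 0 := by
  have hCC : CC Λ e = ∅ := by
    ext Γ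
    simp only [mem_CC_iff, Finset.notMem_empty, iff_false, not_and]
    intro _ _ h3 h4
    exact absurd (h4 h3) heΛ
  rw [Psi, hCC, Finset.sum_empty]

theorem mainKP (p : ℕ) (hp : 2 ≤ p) (M : ℝ) (hM : 1 < M) (K : Finset E → ℝ)
    (hfin : ∀ X : Finset E, p < X.card → K X = 0)
    (hK : ∀ e : E, ∑ X ∈ Finset.univ.filter (fun X : Finset E => e ∈ X), |K X| ≤ epsKP p M) :
    ∀ n : ℕ, ∀ Λ : Finset E, Λ.card ≤ n → ∀ e : E, Psi K M Λ e ≤ aKP p M := by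
  have hM1 : (1:ℝ) ≤ M := hM.le
  have hM0 : (0:ℝ) ≤ M := by linarith
  have ha0 : 0 < aKP p M := aKP_pos hp hM
  have hc1 : (1:ℝ) ≤ M * (1 + aKP p M) := by nlinarith
  have hc0 : (0:ℝ) ≤ M * (1 + aKP p M) := by linarith
  intro n
  induction n with
  | zero =>
    intro Λ hΛ e
    have hΛe : Λ = ∅ := Finset.card_eq_zero.1 (Nat.le_zero.1 hΛ)
    rw [Psi_not_mem (by simp [hΛe])]
    exact ha0.le
  | succ n ih =>
    intro Λ hΛ e
    by_cases heΛ : e ∈ Λ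
    swap
    · rw [Psi_not_mem heΛ]; exact ha0.le
    have hε0 : 0 ≤ epsKP p M :=
      le_trans (Finset.sum_nonneg fun X _ => abs_nonneg _) (hK e)
    have ihf : ∀ f : E, Psi K M (Λ.erase e) f ≤ aKP p M := by
      intro f
      apply ih (Λ.erase e) _ f
      rw [Finset.card_erase_of_mem heΛ]
      omega
    refine (step K hM1 Λ e).trans ?_
    -- bound each Δ-term
    have hτnn : ∀ X : Finset E, 0 ≤ wgt K X * (M * (1 + aKP p M))^(X.card - 1) :=
      fun X => mul_nonneg (wgt_nonneg K X) (pow_nonneg hc0 _)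
    have hbound : ∀ Δ ∈ DD Λ e,
        (∏ X ∈ Δ, wgt K X) * M^((Δ.sup id).card) *
          ∏ f ∈ ((Δ.sup id).erase e), (1 + Psi K M (Λ.erase e) f) ≤
        M * ∏ X ∈ Δ, (wgt K X * (M * (1 + aKP p M))^(X.card - 1)) := by
      intro Δ hΔ
      simp only [DD, Finset.mem_filter, Finset.mem_univ, true_and] at hΔ
      obtain ⟨hΔne, hX⟩ := hΔ
      have heS : e ∈ Δ.sup id := by
        obtain ⟨X0, hX0⟩ := hΔne
        exact Finset.mem_sup.2 ⟨X0, hX0, (hX X0 hX0).2.1⟩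
      have hScard : (Δ.sup id).card ≤ 1 + ∑ X ∈ Δ, (X.card - 1) := by
        have hsubS : Δ.sup id ⊆ insert e (Δ.biUnion (fun X => X.erase e)) := by
          intro v hv
          obtain ⟨X, hXΔ, hvX⟩ := Finset.mem_sup.1 hv
          by_cases hve : v = e
          · exact hve ▸ Finset.mem_insert_self _ _
          · exact Finset.mem_insert_of_mem
              (Finset.mem_biUnion.2 ⟨X, hXΔ, Finset.mem_erase.2 ⟨hve, hvX⟩⟩)
        calc (Δ.sup id).card ≤ (insert e (Δ.biUnion (fun X => X.erase e))).card :=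
              Finset.card_le_card hsubS
          _ ≤ 1 + (Δ.biUnion (fun X => X.erase e)).card := by
              rw [add_comm]; exact Finset.card_insert_le _ _
          _ ≤ 1 + ∑ X ∈ Δ, (X.erase e).card := by
              exact Nat.add_le_add_left Finset.card_biUnion_le _
          _ = 1 + ∑ X ∈ Δ, (X.card - 1) := by
              congr 1
              exact Finset.sum_congr rfl fun X hXΔ =>
                Finset.card_erase_of_mem (hX X hXΔ).2.1
      have hprodwnn : 0 ≤ ∏ X ∈ Δ, wgt K X :=
        Finset.prod_nonneg fun X _ => wgt_nonneg K X
      have h1 : ∏ f ∈ ((Δ.sup id).erase e), (1 + Psi K M (Λ.erase e) f) ≤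
          (1 + aKP p M)^(∑ X ∈ Δ, (X.card - 1)) := by
        calc ∏ f ∈ ((Δ.sup id).erase e), (1 + Psi K M (Λ.erase e) f)
            ≤ ∏ _f ∈ ((Δ.sup id).erase e), (1 + aKP p M) := by
              apply Finset.prod_le_prod
              · intro f _
                exact add_nonneg zero_le_one (Psi_nonneg K hM0 _ f)
              · intro f _
                linarith [ihf f]
          _ = (1 + aKP p M)^(((Δ.sup id).erase e).card) := Finset.prod_const _
          _ ≤ (1 + aKP p M)^(∑ X ∈ Δ, (X.card - 1)) := by
              apply pow_le_pow_right₀ (by linarith)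
              rw [Finset.card_erase_of_mem heS]
              omega
      have h3 : M^((Δ.sup id).card) ≤ M^(1 + ∑ X ∈ Δ, (X.card - 1)) :=
        pow_le_pow_right₀ hM1 hScard
      calc (∏ X ∈ Δ, wgt K X) * M^((Δ.sup id).card) *
            ∏ f ∈ ((Δ.sup id).erase e), (1 + Psi K M (Λ.erase e) f)
          ≤ (∏ X ∈ Δ, wgt K X) * M^(1 + ∑ X ∈ Δ, (X.card - 1)) *
            (1 + aKP p M)^(∑ X ∈ Δ, (X.card - 1)) := by
            apply mul_le_mul
            · exact mul_le_mul_of_nonneg_left h3 hprodwnn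
            · exact h1
            · exact Finset.prod_nonneg fun f _ =>
                add_nonneg zero_le_one (Psi_nonneg K hM0 _ f)
            · exact mul_nonneg hprodwnn (pow_nonneg hM0 _)
        _ = M * ∏ X ∈ Δ, (wgt K X * (M * (1 + aKP p M))^(X.card - 1)) := by
            rw [pow_add, pow_one, ← Finset.prod_pow_eq_pow_sum,
              ← Finset.prod_pow_eq_pow_sum]
            simp only [mul_pow]
            rw [Finset.prod_mul_distrib, Finset.prod_mul_distrib]
            ring
    refine (Finset.sum_le_sum hbound).trans ?_
    rw [← Finset.mul_sum]
    -- bound the sum over Δ by exp(T) - 1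
    have hsum : ∑ Δ ∈ DD Λ e, ∏ X ∈ Δ, (wgt K X * (M * (1 + aKP p M))^(X.card - 1)) ≤
        Real.exp (epsKP p M * Real.exp (epsKP p M) * (M * (1 + aKP p M))^(p-1)) - 1 := by
      set XX := Finset.univ.filter (fun X : Finset E => X.Nonempty ∧ e ∈ X ∧ X ⊆ Λ) with hXX
      have hDDeq : DD Λ e = XX.powerset.filter (fun Δ => Δ.Nonempty) := by
        ext Δ
        simp only [DD, XX, Finset.mem_filter, Finset.mem_univ, true_and,
          Finset.mem_powerset]
        constructor
        · rintro ⟨h1, h2⟩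
          exact ⟨fun X hXΔ => Finset.mem_filter.2 ⟨Finset.mem_univ X, h2 X hXΔ⟩, h1⟩
        · rintro ⟨h1, h2⟩
          exact ⟨h2, fun X hXΔ => (Finset.mem_filter.1 (h1 hXΔ)).2⟩
      have hsplit : ∑ Δ ∈ XX.powerset, ∏ X ∈ Δ, (wgt K X * (M * (1 + aKP p M))^(X.card - 1)) =
          (∑ Δ ∈ DD Λ e, ∏ X ∈ Δ, (wgt K X * (M * (1 + aKP p M))^(X.card - 1))) + 1 := by
        rw [← Finset.sum_filter_add_sum_filter_not XX.powerset (fun Δ => Δ.Nonempty), ← hDDeq]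
        congr 1
        have : XX.powerset.filter (fun Δ => ¬ Δ.Nonempty) = {∅} := by
          ext Δ
          simp only [Finset.mem_filter, Finset.mem_powerset, Finset.not_nonempty_iff_eq_empty,
            Finset.mem_singleton]
          constructor
          · rintro ⟨-, h⟩; exact h
          · rintro rfl; exact ⟨Finset.empty_subset _, rfl⟩
        rw [this, Finset.sum_singleton, Finset.prod_empty]
      have hprodeq : ∑ Δ ∈ XX.powerset, ∏ X ∈ Δ, (wgt K X * (M * (1 + aKP p M))^(X.card - 1)) =
          ∏ X ∈ XX, (1 + wgt K X * (M * (1 + aKP p M))^(X.card - 1)) := by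
        have h := Finset.prod_add (fun X => wgt K X * (M * (1 + aKP p M))^(X.card - 1))
          (fun _ => (1:ℝ)) XX
        simp only [Finset.prod_const_one, mul_one] at h
        rw [Finset.prod_congr rfl (fun X _ => add_comm 1 (wgt K X * (M * (1 + aKP p M))^(X.card - 1))), h]
      have hτle : ∀ X ∈ XX, wgt K X * (M * (1 + aKP p M))^(X.card - 1) ≤
          |K X| * (Real.exp (epsKP p M) * (M * (1 + aKP p M))^(p-1)) := by
        intro X hXmem
        rw [hXX, Finset.mem_filter] at hXmem
        obtain ⟨-, hXne, heX, hXΛ⟩ := hXmem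
        by_cases hcard : p < X.card
        · have : K X = 0 := hfin X hcard
          rw [wgt, this]
          simp only [abs_zero, Real.exp_zero, sub_self, zero_mul]
          positivity
        · have hKX : |K X| ≤ epsKP p M := by
            refine le_trans ?_ (hK e)
            apply Finset.single_le_sum (f := fun X : Finset E => |K X|)
              (fun Y _ => abs_nonneg (K Y))
            exact Finset.mem_filter.2 ⟨Finset.mem_univ X, heX⟩
          have hw : wgt K X ≤ |K X| * Real.exp (epsKP p M) := by
            calc wgt K X ≤ |K X| * Real.exp |K X| := by
                  rw [wgt]; exact exp_sub_one_le _
              _ ≤ |K X| * Real.exp (epsKP p M) :=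
                  mul_le_mul_of_nonneg_left (Real.exp_le_exp.2 hKX) (abs_nonneg _)
          have hpow : (M * (1 + aKP p M))^(X.card - 1) ≤ (M * (1 + aKP p M))^(p-1) :=
            pow_le_pow_right₀ hc1 (by omega)
          calc wgt K X * (M * (1 + aKP p M))^(X.card - 1)
              ≤ (|K X| * Real.exp (epsKP p M)) * (M * (1 + aKP p M))^(p-1) :=
                mul_le_mul hw hpow (pow_nonneg hc0 _)
                  (mul_nonneg (abs_nonneg _) (Real.exp_pos _).le)
            _ = |K X| * (Real.exp (epsKP p M) * (M * (1 + aKP p M))^(p-1)) := by ring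
      have hτsum : ∑ X ∈ XX, wgt K X * (M * (1 + aKP p M))^(X.card - 1) ≤
          epsKP p M * Real.exp (epsKP p M) * (M * (1 + aKP p M))^(p-1) := by
        calc ∑ X ∈ XX, wgt K X * (M * (1 + aKP p M))^(X.card - 1)
            ≤ ∑ X ∈ XX, |K X| * (Real.exp (epsKP p M) * (M * (1 + aKP p M))^(p-1)) :=
              Finset.sum_le_sum hτle
          _ = (∑ X ∈ XX, |K X|) * (Real.exp (epsKP p M) * (M * (1 + aKP p M))^(p-1)) :=
              (Finset.sum_mul _ _ _).symm
          _ ≤ epsKP p M * (Real.exp (epsKP p M) * (M * (1 + aKP p M))^(p-1)) := by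
              apply mul_le_mul_of_nonneg_right _
                (mul_nonneg (Real.exp_pos _).le (pow_nonneg hc0 _))
              refine le_trans ?_ (hK e)
              apply Finset.sum_le_sum_of_subset_of_nonneg
              · intro X hXmem
                rw [hXX, Finset.mem_filter] at hXmem
                exact Finset.mem_filter.2 ⟨Finset.mem_univ X, hXmem.2.2.1⟩
              · intro X _ _; exact abs_nonneg _
          _ = epsKP p M * Real.exp (epsKP p M) * (M * (1 + aKP p M))^(p-1) := by ring
      have hprodle : ∏ X ∈ XX, (1 + wgt K X * (M * (1 + aKP p M))^(X.card - 1)) ≤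
          Real.exp (∑ X ∈ XX, wgt K X * (M * (1 + aKP p M))^(X.card - 1)) := by
        rw [Real.exp_sum]
        apply Finset.prod_le_prod
        · intro X _
          exact add_nonneg zero_le_one (hτnn X)
        · intro X _
          linarith [Real.add_one_le_exp (wgt K X * (M * (1 + aKP p M))^(X.card - 1))]
      have : ∑ Δ ∈ DD Λ e, ∏ X ∈ Δ, (wgt K X * (M * (1 + aKP p M))^(X.card - 1)) =
          (∏ X ∈ XX, (1 + wgt K X * (M * (1 + aKP p M))^(X.card - 1))) - 1 := by
        rw [← hprodeq, hsplit]; ring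
      rw [this]
      have hfinal : Real.exp (∑ X ∈ XX, wgt K X * (M * (1 + aKP p M))^(X.card - 1)) ≤
          Real.exp (epsKP p M * Real.exp (epsKP p M) * (M * (1 + aKP p M))^(p-1)) :=
        Real.exp_le_exp.2 hτsum
      linarith
    calc M * ∑ Δ ∈ DD Λ e, ∏ X ∈ Δ, (wgt K X * (M * (1 + aKP p M))^(X.card - 1))
        ≤ M * (Real.exp (epsKP p M * Real.exp (epsKP p M) * (M * (1 + aKP p M))^(p-1)) - 1) :=
          mul_le_mul_of_nonneg_left hsum hM0
      _ ≤ aKP p M := numericKP p hp M hM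

end KPaux

/-- if the interaction `K` is finite-body (`K(X) = 0` for `|X| > p`) and its norm
`||K|| = sup_{e∈E} Σ_{X : e ∈ X} |K(X)|` satisfies
`||K|| ≤ (log M)(p−1)^p / (2(Mp)^p (1 + (p−1) log M))`, then the pointwise Kotecký–Preiss
condition holds: `Σ_{N : e ∈ N} v_N M^{|N|} ≤ log M` for every `e ∈ E`. -/
theorem small_norm_implies_KP_condition {E : Type*} [Fintype E] [DecidableEq E]
    (p : ℕ) (hp : 2 ≤ p) (M : ℝ) (hM : 1 < M) (K : Finset E → ℝ)
    (hfin : ∀ X : Finset E, p < X.card → K X = 0)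
    (hsmall : (⨆ e : E, ∑ X ∈ Finset.univ.filter (fun X : Finset E => e ∈ X), |K X|) ≤
      Real.log M * ((p : ℝ) - 1) ^ p /
        (2 * (M * (p : ℝ)) ^ p * (1 + ((p : ℝ) - 1) * Real.log M))) :
    ∀ e : E,
      ∑ N ∈ Finset.univ.filter (fun N : Finset E => e ∈ N),
        clusterV K N * M ^ N.card ≤ Real.log M := by
  intro e
  have hbdd : BddAbove (Set.range fun e : E =>
      ∑ X ∈ Finset.univ.filter (fun X : Finset E => e ∈ X), |K X|) :=
    Set.Finite.bddAbove (Set.finite_range _)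
  have hK : ∀ f : E, ∑ X ∈ Finset.univ.filter (fun X : Finset E => f ∈ X), |K X| ≤
      KPaux.epsKP p M := by
    intro f
    exact le_trans (le_ciSup hbdd f) hsmall
  have hPsi := KPaux.mainKP p hp M hM K hfin hK (Finset.univ : Finset E).card
    Finset.univ le_rfl e
  refine le_trans ?_ (le_trans hPsi (min_le_left _ _))
  apply le_of_eq
  have hmaps : ∀ Γ ∈ KPaux.CC (Finset.univ : Finset E) e,
      Γ.sup id ∈ Finset.univ.filter (fun N : Finset E => e ∈ N) := by
    intro Γ hΓ
    exact Finset.mem_filter.2 ⟨Finset.mem_univ _, (KPaux.mem_CC_iff.1 hΓ).2.2.1⟩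
  rw [KPaux.Psi, ← Finset.sum_fiberwise_of_maps_to hmaps (KPaux.Wt K M)]
  apply Finset.sum_congr rfl
  intro N hN
  have hNe : e ∈ N := (Finset.mem_filter.1 hN).2
  have hsets : (KPaux.CC (Finset.univ : Finset E) e).filter (fun Γ => Γ.sup id = N) =
      Finset.univ.filter (fun Γ : Finset (Finset E) =>
        (∀ X ∈ Γ, X.Nonempty) ∧ HyperConnected Γ ∧ Γ.sup id = N) := by
    ext Γ
    simp only [KPaux.mem_CC_iff, Finset.mem_filter, Finset.mem_univ, true_and]
    constructor
    · rintro ⟨⟨h1, h2, h3, h4⟩, h5⟩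
      exact ⟨h1, h2, h5⟩
    · rintro ⟨h1, h2, h5⟩
      exact ⟨⟨h1, h2, h5 ▸ hNe, Finset.subset_univ _⟩, h5⟩
  rw [clusterV, Finset.sum_mul, hsets]
  apply Finset.sum_congr rfl
  intro Γ hΓ
  have hsup : Γ.sup id = N := (Finset.mem_filter.1 hΓ).2.2.2
  rw [KPaux.Wt, hsup]
  rfl
end

section
/- Let p ≥ 2 be an integer and c > 0, and let (ā_n)_{n ≥ 1} be defined recursively by ā_n = c Σ_{k=0}^{p} C(p,k) Σ_{n_1 + … + n_k = n−1, n_i ≥ 1} ā_{n_1} ⋯ ā_{n_k}. Then for every n ≥ 1, ā_n ≤ (c·p^p)^n · (p−1)^{−(1 + (p−1)n)}. -/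
open Finset

lemma key_tuple_sum (f : ℕ → ℝ) (hf : ∀ j, 0 ≤ f j) (k n : ℕ) :
    ∑ m ∈ Finset.range (n+1), ∑ t ∈ (Finset.Nat.antidiagonalTuple k m).filter
        (fun t => ∀ i, 1 ≤ t i), ∏ i, f (t i)
      ≤ (∑ j ∈ Finset.Icc 1 n, f j) ^ k := by
  classical
  have hdisj : (↑(Finset.range (n+1)) : Set ℕ).PairwiseDisjoint
      (fun m => (Finset.Nat.antidiagonalTuple k m).filter (fun t => ∀ i, 1 ≤ t i)) := by
    intro a _ b _ hab
    simp only [Finset.disjoint_left]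
    intro t hta htb
    simp only [Finset.mem_filter, Finset.Nat.mem_antidiagonalTuple] at hta htb
    exact hab (hta.1.symm.trans htb.1)
  rw [← Finset.sum_biUnion hdisj]
  have hrhs : (∑ j ∈ Finset.Icc 1 n, f j) ^ k
      = ∑ t ∈ Fintype.piFinset (fun _ : Fin k => Finset.Icc 1 n), ∏ i, f (t i) := by
    rw [← Finset.prod_univ_sum]
    simp [Finset.prod_const]
  rw [hrhs]
  apply Finset.sum_le_sum_of_subset_of_nonneg
  · intro t ht
    simp only [Finset.mem_biUnion, Finset.mem_filter, Finset.Nat.mem_antidiagonalTuple] at ht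
    obtain ⟨m, hm, ⟨hsum, hpos⟩⟩ := ht
    rw [Finset.mem_range] at hm
    simp only [Fintype.mem_piFinset, Finset.mem_Icc]
    intro i
    refine ⟨hpos i, ?_⟩
    calc t i ≤ ∑ j, t j := Finset.single_le_sum (fun _ _ => Nat.zero_le _) (Finset.mem_univ i)
    _ = m := hsum
    _ ≤ n := Nat.lt_succ_iff.mp hm
  · intro t _ _
    exact Finset.prod_nonneg fun i _ => hf _

lemma abar_nonneg_aux (p : ℕ) (c : ℝ) (hc : 0 < c) (abar : ℕ → ℝ)
    (hrec : ∀ n : ℕ, 1 ≤ n →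
      abar n = c * ∑ k ∈ Finset.range (p + 1), (p.choose k : ℝ) *
        ∑ t ∈ (Finset.Nat.antidiagonalTuple k (n - 1)).filter (fun t => ∀ i, 1 ≤ t i),
          ∏ i, abar (t i)) :
    ∀ m : ℕ, 1 ≤ m → 0 ≤ abar m := by
  intro m
  induction m using Nat.strong_induction_on with
  | _ m ih =>
    intro hm
    rw [hrec m hm]
    apply mul_nonneg hc.le
    apply Finset.sum_nonneg
    intro k _
    apply mul_nonneg (Nat.cast_nonneg _)
    apply Finset.sum_nonneg
    intro t ht
    simp only [Finset.mem_filter, Finset.Nat.mem_antidiagonalTuple] at ht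
    apply Finset.prod_nonneg
    intro i _
    apply ih (t i) _ (ht.2 i)
    calc t i ≤ ∑ j, t j := Finset.single_le_sum (fun _ _ => Nat.zero_le _) (Finset.mem_univ i)
    _ = m - 1 := ht.1
    _ < m := Nat.sub_lt hm one_pos

/-- the sequence `(ā_n)` defined by the recursion
`ā_n = c Σ_{k=0}^p C(p,k) Σ_{n_1+…+n_k = n−1, n_i ≥ 1} ā_{n_1} ⋯ ā_{n_k}` satisfies
`ā_n ≤ (c·p^p)^n · (p−1)^{−(1+(p−1)n)}` for every `n ≥ 1`. -/
theorem abar_coefficient_bound (p : ℕ) (hp : 2 ≤ p) (c : ℝ) (hc : 0 < c)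
    (abar : ℕ → ℝ)
    (hrec : ∀ n : ℕ, 1 ≤ n →
      abar n = c * ∑ k ∈ Finset.range (p + 1), (p.choose k : ℝ) *
        ∑ t ∈ (Finset.Nat.antidiagonalTuple k (n - 1)).filter (fun t => ∀ i, 1 ≤ t i),
          ∏ i, abar (t i)) :
    ∀ n : ℕ, 1 ≤ n →
      abar n ≤ (c * (p : ℝ) ^ p) ^ n / ((p : ℝ) - 1) ^ (1 + (p - 1) * n) := by
  classical
  intro n hn
  have hp2 : (2:ℝ) ≤ (p:ℝ) := by exact_mod_cast hp
  set q : ℝ := (p:ℝ) - 1 with hqdef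
  have hq : 0 < q := by simp only [hqdef]; linarith
  have hppos : (0:ℝ) < (p:ℝ) := by linarith
  have hcp : 0 < c * (p:ℝ)^p := mul_pos hc (pow_pos hppos p)
  set ε : ℝ := q^(p-1) / (c * (p:ℝ)^p) with hεdef
  have hε : 0 < ε := div_pos (pow_pos hq _) hcp
  have hab := abar_nonneg_aux p c hc abar hrec
  set g : ℕ → ℝ := fun j => if j = 0 then 0 else abar j * ε^j with hgdef
  have hgval : ∀ j, 1 ≤ j → g j = abar j * ε^j := by
    intro j hj
    simp only [hgdef, if_neg (Nat.one_le_iff_ne_zero.mp hj)]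
  have hg : ∀ j, 0 ≤ g j := by
    intro j
    by_cases hj : j = 0
    · simp [hgdef, hj]
    · rw [hgval j (Nat.one_le_iff_ne_zero.mpr hj)]
      exact mul_nonneg (hab j (Nat.one_le_iff_ne_zero.mpr hj)) (pow_pos hε j).le
  -- the per-index expansion in terms of g
  have hexpand : ∀ j, 1 ≤ j → g j = ∑ k ∈ Finset.range (p+1),
      (c*ε) * ((p.choose k : ℝ) *
        ∑ t ∈ (Finset.Nat.antidiagonalTuple k (j-1)).filter (fun t => ∀ i, 1 ≤ t i),
          ∏ i, g (t i)) := by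
    intro j hj
    have hinner : ∀ k : ℕ,
        (∑ t ∈ (Finset.Nat.antidiagonalTuple k (j-1)).filter (fun t => ∀ i, 1 ≤ t i),
          ∏ i, abar (t i)) * ε^(j-1)
        = ∑ t ∈ (Finset.Nat.antidiagonalTuple k (j-1)).filter (fun t => ∀ i, 1 ≤ t i),
          ∏ i, g (t i) := by
      intro k
      rw [Finset.sum_mul]
      apply Finset.sum_congr rfl
      intro t ht
      simp only [Finset.mem_filter, Finset.Nat.mem_antidiagonalTuple] at ht
      have hεprod : ε^(j-1) = ∏ i, ε^(t i) := by
        rw [Finset.prod_pow_eq_pow_sum, ht.1]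
      rw [hεprod, ← Finset.prod_mul_distrib]
      apply Finset.prod_congr rfl
      intro i _
      rw [hgval (t i) (ht.2 i)]
    have h1 : ε^j = ε^(j-1) * ε := by
      rw [← pow_succ]; congr 1; omega
    rw [hgval j hj, hrec j hj, h1]
    have h2 : c * (∑ k ∈ Finset.range (p+1), (p.choose k : ℝ) *
        ∑ t ∈ (Finset.Nat.antidiagonalTuple k (j-1)).filter (fun t => ∀ i, 1 ≤ t i),
          ∏ i, abar (t i)) * (ε^(j-1) * ε)
        = ∑ k ∈ Finset.range (p+1), (c*ε) * ((p.choose k : ℝ) *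
            ((∑ t ∈ (Finset.Nat.antidiagonalTuple k (j-1)).filter (fun t => ∀ i, 1 ≤ t i),
              ∏ i, abar (t i)) * ε^(j-1))) := by
      rw [Finset.mul_sum, Finset.sum_mul]
      apply Finset.sum_congr rfl
      intro k _
      ring
    rw [h2]
    exact Finset.sum_congr rfl fun k _ => by rw [hinner k]
  -- partial sums are bounded by 1/q
  have hS : ∀ N : ℕ, (∑ j ∈ Finset.Icc 1 N, g j) ≤ 1/q := by
    intro N
    induction N with
    | zero => simp; positivity
    | succ N ihN =>
      have hSnn : 0 ≤ ∑ j ∈ Finset.Icc 1 N, g j :=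
        Finset.sum_nonneg fun j _ => hg j
      have step1 : ∑ j ∈ Finset.Icc 1 (N+1), g j
          = ∑ k ∈ Finset.range (p+1), (c*ε) * ((p.choose k : ℝ) *
              ∑ j ∈ Finset.Icc 1 (N+1),
                ∑ t ∈ (Finset.Nat.antidiagonalTuple k (j-1)).filter (fun t => ∀ i, 1 ≤ t i),
                  ∏ i, g (t i)) := by
        rw [Finset.sum_congr rfl (fun j hj => hexpand j (Finset.mem_Icc.mp hj).1),
          Finset.sum_comm]
        apply Finset.sum_congr rfl
        intro k _
        rw [Finset.mul_sum, Finset.mul_sum]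
      have step2 : ∀ k : ℕ,
          ∑ j ∈ Finset.Icc 1 (N+1),
              ∑ t ∈ (Finset.Nat.antidiagonalTuple k (j-1)).filter (fun t => ∀ i, 1 ≤ t i),
                ∏ i, g (t i)
            ≤ (∑ j ∈ Finset.Icc 1 N, g j) ^ k := by
        intro k
        have hre : ∑ j ∈ Finset.Icc 1 (N+1),
            ∑ t ∈ (Finset.Nat.antidiagonalTuple k (j-1)).filter (fun t => ∀ i, 1 ≤ t i),
              ∏ i, g (t i)
            = ∑ m ∈ Finset.range (N+1),
              ∑ t ∈ (Finset.Nat.antidiagonalTuple k m).filter (fun t => ∀ i, 1 ≤ t i),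
                ∏ i, g (t i) := by
          rw [show Finset.Icc 1 (N+1) = Finset.Ico 1 (N+2) by rfl,
            Finset.sum_Ico_eq_sum_range]
          simp
        rw [hre]
        exact key_tuple_sum g hg k N
      calc ∑ j ∈ Finset.Icc 1 (N+1), g j
          = ∑ k ∈ Finset.range (p+1), (c*ε) * ((p.choose k : ℝ) *
              ∑ j ∈ Finset.Icc 1 (N+1),
                ∑ t ∈ (Finset.Nat.antidiagonalTuple k (j-1)).filter (fun t => ∀ i, 1 ≤ t i),
                  ∏ i, g (t i)) := step1
        _ ≤ ∑ k ∈ Finset.range (p+1), (c*ε) * ((p.choose k : ℝ) *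
              (∑ j ∈ Finset.Icc 1 N, g j) ^ k) := by
            apply Finset.sum_le_sum
            intro k _
            apply mul_le_mul_of_nonneg_left _ (mul_pos hc hε).le
            exact mul_le_mul_of_nonneg_left (step2 k) (Nat.cast_nonneg _)
        _ = (c*ε) * ((∑ j ∈ Finset.Icc 1 N, g j) + 1) ^ p := by
            rw [add_pow, Finset.mul_sum]
            apply Finset.sum_congr rfl
            intro k _
            simp only [one_pow]
            ring
        _ ≤ (c*ε) * (1/q + 1) ^ p := by
            apply mul_le_mul_of_nonneg_left _ (mul_pos hc hε).le
            exact pow_le_pow_left₀ (by linarith) (by linarith) p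
        _ = 1/q := by
            have hp' : p - 1 + 1 = p := by omega
            have hq1 : 1/q + 1 = (p:ℝ)/q := by
              field_simp [hqdef]
              linarith
            have hqp : q^p = q^(p-1) * q := by
              conv_lhs => rw [← hp']
              rw [pow_succ]
            rw [hq1, hεdef, div_pow, hqp]
            field_simp
  -- conclude
  have h1 : g n ≤ 1/q :=
    le_trans (Finset.single_le_sum (fun j _ => hg j)
      (Finset.mem_Icc.mpr ⟨hn, le_refl n⟩)) (hS n)
  rw [hgval n hn] at h1
  have hrw : (c * (p:ℝ)^p) ^ n / q ^ (1 + (p - 1) * n) = (1/q) / ε^n := by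
    rw [pow_add, pow_one, hεdef, div_pow, ← pow_mul]
    rw [div_div_eq_mul_div, div_eq_div_iff (by positivity) (by positivity)]
    field_simp
  calc abar n ≤ (1/q) / ε^n := (le_div_iff₀ (pow_pos hε n)).mpr h1
  _ = (c * (p:ℝ)^p) ^ n / q ^ (1 + (p - 1) * n) := hrw.symm
end

section
/- Let p ≥ 2 be an integer and c > 0, and let (ā_n)_{n ≥ 1} be defined recursively by ā_n = c Σ_{k=0}^{p} C(p,k) Σ_{n_1 + … + n_k = n−1, n_i ≥ 1} ā_{n_1} ⋯ ā_{n_k}. Then the power series w(z) = Σ_{n=1}^∞ ā_n z^n converges (absolutely) for all real z with |z| ≤ (p−1)^{p−1}/(c·p^p); in particular its radius of convergence is at least (p−1)^{p−1}/(c·p^p) > 0. -/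
open Finset

private lemma sum_shift (b : ℕ → ℝ) (N : ℕ) :
    ∑ i ∈ Finset.range N, b (i + 1) = ∑ n ∈ Finset.Icc 1 N, b n := by
  induction N with
  | zero => simp
  | succ N ih => rw [Finset.sum_range_succ, ih, Finset.sum_Icc_succ_top (by omega)]

/-- the power series `w(z) = Σ_{n≥1} ā_n z^n` built from the recursively defined
sequence `(ā_n)` converges absolutely for all real `z` with `|z| ≤ (p−1)^{p−1}/(c·p^p)`; in
particular its radius of convergence is at least `(p−1)^{p−1}/(c·p^p) > 0`. -/
theorem abar_series_converges (p : ℕ) (hp : 2 ≤ p) (c : ℝ) (hc : 0 < c)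
    (abar : ℕ → ℝ)
    (hrec : ∀ n : ℕ, 1 ≤ n →
      abar n = c * ∑ k ∈ Finset.range (p + 1), (p.choose k : ℝ) *
        ∑ t ∈ (Finset.Nat.antidiagonalTuple k (n - 1)).filter (fun t => ∀ i, 1 ≤ t i),
          ∏ i, abar (t i)) :
    0 < ((p : ℝ) - 1) ^ (p - 1) / (c * (p : ℝ) ^ p) ∧
    ∀ z : ℝ, |z| ≤ ((p : ℝ) - 1) ^ (p - 1) / (c * (p : ℝ) ^ p) →
      Summable (fun n : ℕ => |abar (n + 1) * z ^ (n + 1)|) := by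
  have hp1 : (1:ℝ) < (p:ℝ) := by exact_mod_cast lt_of_lt_of_le one_lt_two hp
  have hpR : (0:ℝ) < (p:ℝ) - 1 := by linarith
  have hppos : (0:ℝ) < (p:ℝ) := by linarith
  set R : ℝ := ((p : ℝ) - 1) ^ (p - 1) / (c * (p : ℝ) ^ p) with hR
  have hRpos : 0 < R := div_pos (pow_pos hpR _) (mul_pos hc (pow_pos hppos _))
  refine ⟨hRpos, fun z hz => ?_⟩
  -- nonnegativity of abar
  have habar : ∀ n, 1 ≤ n → 0 ≤ abar n := by
    intro n
    induction n using Nat.strong_induction_on with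
    | _ n ih =>
      intro hn
      rw [hrec n hn]
      refine mul_nonneg hc.le (Finset.sum_nonneg fun k _ => ?_)
      refine mul_nonneg (Nat.cast_nonneg _) (Finset.sum_nonneg fun t ht => ?_)
      obtain ⟨ht1, ht2⟩ := Finset.mem_filter.mp ht
      rw [Finset.Nat.mem_antidiagonalTuple] at ht1
      refine Finset.prod_nonneg fun i _ => ?_
      have h2 : t i ≤ n - 1 :=
        ht1 ▸ Finset.single_le_sum (fun j _ => Nat.zero_le _) (Finset.mem_univ i)
      exact ih (t i) (lt_of_le_of_lt h2 (Nat.sub_lt hn one_pos)) (ht2 i)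
  set b : ℕ → ℝ := fun n => abar n * R ^ n with hb
  have hbnn : ∀ n, 1 ≤ n → 0 ≤ b n := fun n hn =>
    mul_nonneg (habar n hn) (pow_pos hRpos n).le
  -- recursion for b
  have hbrec : ∀ n, 1 ≤ n → b n = c * R * ∑ k ∈ Finset.range (p+1), (p.choose k : ℝ) *
      ∑ t ∈ (Finset.Nat.antidiagonalTuple k (n-1)).filter (fun t => ∀ i, 1 ≤ t i),
        ∏ i, b (t i) := by
    intro n hn
    have key : ∀ k : ℕ, ∀ t ∈ (Finset.Nat.antidiagonalTuple k (n-1)).filter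
        (fun t => ∀ i, 1 ≤ t i),
        (∏ i, b (t i)) = (∏ i, abar (t i)) * R ^ (n-1) := by
      intro k t ht
      obtain ⟨ht1, _⟩ := Finset.mem_filter.mp ht
      rw [Finset.Nat.mem_antidiagonalTuple] at ht1
      simp only [hb]
      rw [Finset.prod_mul_distrib, Finset.prod_pow_eq_pow_sum, ht1]
    have hpow : R ^ n = R * R ^ (n - 1) := by
      conv_lhs => rw [show n = 1 + (n-1) by omega]
      rw [pow_add, pow_one]
    calc b n = abar n * R ^ n := rfl
      _ = (c * ∑ k ∈ Finset.range (p+1), (p.choose k : ℝ) *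
            ∑ t ∈ (Finset.Nat.antidiagonalTuple k (n-1)).filter (fun t => ∀ i, 1 ≤ t i),
              ∏ i, abar (t i)) * (R * R ^ (n-1)) := by rw [← hrec n hn, ← hpow]
      _ = c * R * ∑ k ∈ Finset.range (p+1), (p.choose k : ℝ) *
            ((∑ t ∈ (Finset.Nat.antidiagonalTuple k (n-1)).filter (fun t => ∀ i, 1 ≤ t i),
              ∏ i, abar (t i)) * R ^ (n-1)) := by
          rw [Finset.mul_sum, Finset.sum_mul, Finset.mul_sum]
          exact Finset.sum_congr rfl fun k _ => by ring
      _ = c * R * ∑ k ∈ Finset.range (p+1), (p.choose k : ℝ) *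
            ∑ t ∈ (Finset.Nat.antidiagonalTuple k (n-1)).filter (fun t => ∀ i, 1 ≤ t i),
              ∏ i, b (t i) := by
          congr 1
          refine Finset.sum_congr rfl fun k _ => ?_
          rw [Finset.sum_mul]
          congr 1
          exact (Finset.sum_congr rfl (key k)).symm
  set S : ℕ → ℝ := fun N => ∑ n ∈ Finset.Icc 1 N, b n with hS
  have hSnn : ∀ N, 0 ≤ S N :=
    fun N => Finset.sum_nonneg fun n hn => hbnn n (Finset.mem_Icc.mp hn).1
  set B : ℝ := 1 / ((p:ℝ) - 1) with hB
  have hBpos : 0 < B := by positivity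
  -- the key numeric identity
  have hnum : c * R * (1 + B) ^ p = B := by
    have h1 : (1 : ℝ) + 1/((p:ℝ)-1) = (p:ℝ)/((p:ℝ)-1) := by field_simp; ring
    have h2 : ((p:ℝ)-1)^p = ((p:ℝ)-1)^(p-1) * ((p:ℝ)-1) := by
      rw [← pow_succ, Nat.sub_add_cancel (by omega)]
    rw [hB, hR, h1, div_pow, h2]
    have hx1 : ((p:ℝ)-1) ≠ 0 := ne_of_gt hpR
    have hx2 : ((p:ℝ)-1)^(p-1) ≠ 0 := pow_ne_zero _ hx1
    have hx3 : ((p:ℝ))^p ≠ 0 := pow_ne_zero _ hppos.ne'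
    field_simp
  -- boundedness of partial sums
  have hSle : ∀ N, S N ≤ B := by
    intro N
    induction N with
    | zero => simpa [hS] using hBpos.le
    | succ N ih =>
      have hswap : S (N+1) = c * R * ∑ k ∈ Finset.range (p+1), (p.choose k : ℝ) *
          ∑ n ∈ Finset.Icc 1 (N+1),
            ∑ t ∈ (Finset.Nat.antidiagonalTuple k (n-1)).filter (fun t => ∀ i, 1 ≤ t i),
              ∏ i, b (t i) := by
        rw [hS]
        simp only []
        rw [Finset.sum_congr rfl (fun n hn => hbrec n (Finset.mem_Icc.mp hn).1)]
        rw [← Finset.mul_sum, Finset.sum_comm]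
        congr 1
        refine Finset.sum_congr rfl fun k _ => ?_
        rw [Finset.mul_sum]
      have hinner : ∀ k ∈ Finset.range (p+1),
          ∑ n ∈ Finset.Icc 1 (N+1),
            ∑ t ∈ (Finset.Nat.antidiagonalTuple k (n-1)).filter (fun t => ∀ i, 1 ≤ t i),
              ∏ i, b (t i) ≤ (S N) ^ k := by
        intro k _
        have hdisj : (↑(Finset.Icc 1 (N+1)) : Set ℕ).PairwiseDisjoint
            (fun n => (Finset.Nat.antidiagonalTuple k (n-1)).filter (fun t => ∀ i, 1 ≤ t i)) := by
          intro n hn m hm hnm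
          simp only [Finset.disjoint_left]
          intro t ht ht'
          obtain ⟨ht1, _⟩ := Finset.mem_filter.mp ht
          obtain ⟨ht1', _⟩ := Finset.mem_filter.mp ht'
          rw [Finset.Nat.mem_antidiagonalTuple] at ht1 ht1'
          have hn1 : 1 ≤ n := (Finset.mem_Icc.mp hn).1
          have hm1 : 1 ≤ m := (Finset.mem_Icc.mp hm).1
          exact hnm (by omega)
        rw [← Finset.sum_biUnion hdisj]
        have hsub : (Finset.Icc 1 (N+1)).biUnion
            (fun n => (Finset.Nat.antidiagonalTuple k (n-1)).filter (fun t => ∀ i, 1 ≤ t i)) ⊆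
            Fintype.piFinset (fun _ : Fin k => Finset.Icc 1 N) := by
          intro t ht
          obtain ⟨n, hn, ht⟩ := Finset.mem_biUnion.mp ht
          obtain ⟨ht1, ht2⟩ := Finset.mem_filter.mp ht
          rw [Finset.Nat.mem_antidiagonalTuple] at ht1
          obtain ⟨hn1, hn2⟩ := Finset.mem_Icc.mp hn
          rw [Fintype.mem_piFinset]
          intro i
          rw [Finset.mem_Icc]
          refine ⟨ht2 i, ?_⟩
          have : t i ≤ n - 1 :=
            ht1 ▸ Finset.single_le_sum (fun j _ => Nat.zero_le _) (Finset.mem_univ i)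
          omega
        have hpi : (S N) ^ k =
            ∑ t ∈ Fintype.piFinset (fun _ : Fin k => Finset.Icc 1 N), ∏ i, b (t i) := by
          rw [← Finset.prod_univ_sum]
          simp [hS, Finset.prod_const]
        rw [hpi]
        refine Finset.sum_le_sum_of_subset_of_nonneg hsub fun t ht _ => ?_
        rw [Fintype.mem_piFinset] at ht
        exact Finset.prod_nonneg fun i _ =>
          hbnn (t i) (Finset.mem_Icc.mp (ht i)).1
      calc S (N+1) = c * R * ∑ k ∈ Finset.range (p+1), (p.choose k : ℝ) *
            ∑ n ∈ Finset.Icc 1 (N+1),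
              ∑ t ∈ (Finset.Nat.antidiagonalTuple k (n-1)).filter (fun t => ∀ i, 1 ≤ t i),
                ∏ i, b (t i) := hswap
        _ ≤ c * R * ∑ k ∈ Finset.range (p+1), (p.choose k : ℝ) * (S N) ^ k := by
            refine mul_le_mul_of_nonneg_left (Finset.sum_le_sum fun k hk => ?_)
              (mul_pos hc hRpos).le
            exact mul_le_mul_of_nonneg_left (hinner k hk) (Nat.cast_nonneg _)
        _ = c * R * (S N + 1) ^ p := by
            rw [add_pow]
            congr 1
            refine Finset.sum_congr rfl fun k _ => ?_
            rw [one_pow]; ring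
        _ ≤ c * R * (B + 1) ^ p := by
            refine mul_le_mul_of_nonneg_left ?_ (mul_pos hc hRpos).le
            exact pow_le_pow_left₀ (by linarith [hSnn N]) (by linarith) p
        _ = B := by rw [show B + 1 = 1 + B by ring]; exact hnum
  -- summability
  have hsum : Summable (fun n : ℕ => b (n+1)) := by
    refine summable_of_sum_range_le (c := B) (fun n => hbnn (n+1) (by omega)) fun n => ?_
    rw [sum_shift]
    exact hSle n
  refine Summable.of_nonneg_of_le (fun n => abs_nonneg _) (fun n => ?_) hsum
  rw [abs_mul, abs_pow, abs_of_nonneg (habar (n+1) (by omega))]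
  exact mul_le_mul_of_nonneg_left
    (pow_le_pow_left₀ (abs_nonneg z) hz (n+1)) (habar (n+1) (by omega))
end

section
/- Let p ≥ 2 be an integer and consider the function F(M) = (log M)(p−1)^p / (2(Mp)^p(1 + (p−1) log M)) for M ∈ (1, ∞). Then F attains its maximum over (1,∞) at the unique M* with log M* = (−p + √(5p² − 4p)) / (2p(p−1)). -/
private lemma key_ineq (pr a t u : ℝ) (hpr : 0 < pr) (ha : 0 < a)
    (ht : 0 < t) (hu : 0 < u) (hq : pr * a * t ^ 2 + pr * t = 1) :
    u * Real.exp (pr * t) * (1 + a * t) ≤ t * Real.exp (pr * u) * (1 + a * u) ∧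
      (u ≠ t → u * Real.exp (pr * t) * (1 + a * t) < t * Real.exp (pr * u) * (1 + a * u)) := by
  have hau : 0 < 1 + a * u := by nlinarith
  have hE : Real.exp (pr * t) * (1 + pr * (u - t)) ≤ Real.exp (pr * u) := by
    have h1 : 1 + pr * (u - t) ≤ Real.exp (pr * (u - t)) := by
      have := Real.add_one_le_exp (pr * (u - t)); linarith
    calc Real.exp (pr * t) * (1 + pr * (u - t))
        ≤ Real.exp (pr * t) * Real.exp (pr * (u - t)) :=
          mul_le_mul_of_nonneg_left h1 (Real.exp_pos _).le
      _ = Real.exp (pr * u) := by rw [← Real.exp_add]; ring_nf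
  have hDelta : (1 + pr * (u - t)) * (t * (1 + a * u)) - u * (1 + a * t)
      = pr * a * t * (u - t) ^ 2 + (u - t) * (pr * a * t ^ 2 + pr * t - 1) := by ring
  have hstep : ∀ v : ℝ, u ≠ t →
      u * Real.exp (pr * t) * (1 + a * t) < t * Real.exp (pr * u) * (1 + a * u) := by
    intro _ hne
    have hsq : 0 < (u - t) ^ 2 := by
      have : u - t ≠ 0 := sub_ne_zero.mpr hne
      positivity
    have hD : u * (1 + a * t) < (1 + pr * (u - t)) * (t * (1 + a * u)) := by
      nlinarith [mul_pos (mul_pos (mul_pos hpr ha) ht) hsq]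
    have h2 : Real.exp (pr * t) * (u * (1 + a * t))
        < Real.exp (pr * t) * ((1 + pr * (u - t)) * (t * (1 + a * u))) :=
      mul_lt_mul_of_pos_left hD (Real.exp_pos _)
    have h3 : Real.exp (pr * t) * (1 + pr * (u - t)) * (t * (1 + a * u))
        ≤ Real.exp (pr * u) * (t * (1 + a * u)) :=
      mul_le_mul_of_nonneg_right hE (by positivity)
    nlinarith [h2, h3]
  constructor
  · rcases eq_or_ne u t with rfl | hne
    · exact le_rfl
    · exact (hstep 0 hne).le
  · exact hstep 0

/-- for an integer `p ≥ 2`, the function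
`F(M) = (log M)(p−1)^p / (2(Mp)^p (1 + (p−1) log M))` on `(1,∞)` attains its maximum at the
unique `M*` with `log M* = (−p + √(5p² − 4p)) / (2p(p−1))`. -/
theorem threshold_function_max (p : ℕ) (hp : 2 ≤ p) :
    ∃ Mstar : ℝ, (1 < Mstar ∧
        Real.log Mstar =
          (-(p : ℝ) + Real.sqrt (5 * (p : ℝ) ^ 2 - 4 * (p : ℝ))) /
            (2 * (p : ℝ) * ((p : ℝ) - 1))) ∧
      IsMaxOn
        (fun M : ℝ => Real.log M * ((p : ℝ) - 1) ^ p /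
          (2 * (M * (p : ℝ)) ^ p * (1 + ((p : ℝ) - 1) * Real.log M)))
        (Set.Ioi 1) Mstar ∧
      ∀ M ∈ Set.Ioi (1 : ℝ),
        IsMaxOn
          (fun M : ℝ => Real.log M * ((p : ℝ) - 1) ^ p /
            (2 * (M * (p : ℝ)) ^ p * (1 + ((p : ℝ) - 1) * Real.log M)))
          (Set.Ioi 1) M → M = Mstar := by
  set pr : ℝ := (p : ℝ) with hprdef
  have hpr2 : (2 : ℝ) ≤ pr := by rw [hprdef]; exact_mod_cast hp
  have hpr : 0 < pr := by linarith
  set a : ℝ := pr - 1 with hadef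
  have ha : 0 < a := by simp [hadef]; linarith
  have hs2 : Real.sqrt (5 * pr ^ 2 - 4 * pr) ^ 2 = 5 * pr ^ 2 - 4 * pr := by
    rw [Real.sq_sqrt]; nlinarith
  set s : ℝ := Real.sqrt (5 * pr ^ 2 - 4 * pr) with hsdef
  have hs0 : 0 ≤ s := Real.sqrt_nonneg _
  have hsp : pr < s := by nlinarith
  set t : ℝ := (-pr + s) / (2 * pr * a) with htdef
  have ht : 0 < t := div_pos (by linarith) (by positivity)
  have hq : pr * a * t ^ 2 + pr * t = 1 := by
    rw [htdef]
    field_simp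
    linear_combination hs2 - 4*pr * hadef
  have hstar1 : (1:ℝ) < Real.exp t := by
    calc (1:ℝ) = Real.exp 0 := Real.exp_zero.symm
      _ < Real.exp t := Real.exp_lt_exp.2 ht
  have hat : 0 < 1 + a * t := by nlinarith
  have hDt : 0 < 2 * (Real.exp t * pr) ^ p * (1 + a * t) := by
    have : (0:ℝ) < (Real.exp t * pr) ^ p := pow_pos (by positivity) p
    positivity
  have hEt : (Real.exp t * pr) ^ p = Real.exp (pr * t) * pr ^ p := by
    rw [mul_pow, ← Real.exp_nat_mul, hprdef]
  have hcomp : ∀ M ∈ Set.Ioi (1:ℝ),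
      Real.log M * a ^ p / (2 * (M * pr) ^ p * (1 + a * Real.log M)) ≤
        t * a ^ p / (2 * (Real.exp t * pr) ^ p * (1 + a * t)) ∧
      (M ≠ Real.exp t →
        Real.log M * a ^ p / (2 * (M * pr) ^ p * (1 + a * Real.log M)) <
          t * a ^ p / (2 * (Real.exp t * pr) ^ p * (1 + a * t))) := by
    intro M hM
    rw [Set.mem_Ioi] at hM
    have hMpos : (0:ℝ) < M := by linarith
    set u : ℝ := Real.log M with hudef
    have hu : 0 < u := Real.log_pos hM
    have hMexp : Real.exp u = M := Real.exp_log hMpos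
    have hau : 0 < 1 + a * u := by nlinarith
    have hDu : 0 < 2 * (M * pr) ^ p * (1 + a * u) := by
      have : (0:ℝ) < (M * pr) ^ p := pow_pos (by positivity) p
      positivity
    have hEu : (M * pr) ^ p = Real.exp (pr * u) * pr ^ p := by
      rw [mul_pow, ← hMexp, ← Real.exp_nat_mul, hprdef]
    have hkey := key_ineq pr a t u hpr ha ht hu hq
    have hc : (0:ℝ) < 2 * a ^ p * pr ^ p := by positivity
    constructor
    · rw [div_le_div_iff₀ hDu hDt, hEu, hEt]
      have hm := mul_le_mul_of_nonneg_right hkey.1 hc.le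
      nlinarith [hm]
    · intro hMne
      have hne : u ≠ t := fun h => hMne (by rw [← hMexp, h])
      rw [div_lt_div_iff₀ hDu hDt, hEu, hEt]
      have hm := mul_lt_mul_of_pos_right (hkey.2 hne) hc
      nlinarith [hm]
  refine ⟨Real.exp t, ⟨hstar1, by rw [Real.log_exp]⟩, ?_, ?_⟩
  · exact isMaxOn_iff.mpr fun x hx => by simpa only [Real.log_exp] using (hcomp x hx).1
  · intro M hM hmax
    by_contra hne
    have h1 := isMaxOn_iff.mp hmax (Real.exp t) (Set.mem_Ioi.mpr hstar1)
    have h2 := (hcomp M hM).2 hne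
    simp only [Real.log_exp] at h1
    exact absurd h1 (not_le.mpr h2)
end
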